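/- arXiv:1605.05277 — 6 statements merged into one kernel-verified Lean document; each statement's English description precedes it below -/
import Mathlib

section
/- Let b_0,…,b_p be positive integers and let σ = {w ∈ ℝ_{≥0}^{p+1} : ∑_{i=0}^p b_i w_i = 1}, viewed as a polytope with tangent lattice T_{σ,ℤ} = {w ∈ ℤ^{p+1} : ∑_i b_i w_i = 0}. Then the greatest integer b such that the constant function b^{-1} is integral affine on σ equals gcd(b_0,…,b_p), and the volume of σ with respect to the Lebesgue measure normalized by T_{σ,ℤ} equals gcd(b_i)/(p! ∏_i b_i). -/
/- STATEMENT 0: For the simplex σ = {w ∈ ℝ_{≥0}^{p+1} : ∑ b_i w_i = 1} with tangent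
lattice T_{σ,ℤ} = {w ∈ ℤ^{p+1} : ∑ b_i w_i = 0}: the greatest integer b such that the
constant 1/b is integral affine on σ is gcd(b_i), and the volume of σ with respect to
the Lebesgue measure normalized by T_{σ,ℤ} (computed via any ℤ-basis of T_{σ,ℤ} and
any basepoint on the affine hyperplane) equals gcd(b_i)/(p! ∏ b_i). -/

open MeasureTheory

set_option maxHeartbeats 1000000

/-- The linear form w ↦ ∑ b_i w_i on ℤ^{p+1}. -/
noncomputable def sumCoeff (p : ℕ) (b : Fin (p + 1) → ℕ) : (Fin (p + 1) → ℤ) →ₗ[ℤ] ℤ :=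
  ∑ i, (b i : ℤ) • LinearMap.proj i

lemma mset_closed (n : ℕ) (t : ℝ) :
    IsClosed {y : Fin n → ℝ | (∀ i, 0 ≤ y i) ∧ ∑ i, y i ≤ t} := by
  have h1 : {y : Fin n → ℝ | ∀ i, 0 ≤ y i} = ⋂ i, {y | 0 ≤ y i} := by ext y; simp
  have : {y : Fin n → ℝ | (∀ i, 0 ≤ y i) ∧ ∑ i, y i ≤ t}
      = {y : Fin n → ℝ | ∀ i, 0 ≤ y i} ∩ {y | ∑ i, y i ≤ t} := rfl
  rw [this, h1]
  exact (isClosed_iInter fun i => isClosed_le continuous_const (continuous_apply i)).inter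
    (isClosed_le (continuous_finset_sum _ fun i _ => continuous_apply i) continuous_const)

lemma vol_simplex (n : ℕ) : ∀ t : ℝ, 0 ≤ t →
    volume {y : Fin n → ℝ | (∀ i, 0 ≤ y i) ∧ ∑ i, y i ≤ t}
      = ENNReal.ofReal (t ^ n / n.factorial) := by
  induction n with
  | zero =>
    intro t ht
    have h : {y : Fin 0 → ℝ | (∀ i, 0 ≤ y i) ∧ ∑ i, y i ≤ t} = Set.univ := by
      ext y
      simp only [Set.mem_setOf_eq, Set.mem_univ, iff_true]
      exact ⟨fun i => i.elim0, by simpa using ht⟩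
    rw [h]
    rw [volume_pi, Measure.pi_univ]
    simp
  | succ n ih =>
    intro t ht
    set Q : Set (ℝ × (Fin n → ℝ)) :=
      {q | 0 ≤ q.1 ∧ (∀ i, 0 ≤ q.2 i) ∧ q.1 + ∑ i, q.2 i ≤ t} with hQ
    have hQclosed : IsClosed Q := by
      have h1 : Q = {q : ℝ × (Fin n → ℝ) | 0 ≤ q.1} ∩
          ((⋂ i, {q : ℝ × (Fin n → ℝ) | 0 ≤ q.2 i}) ∩
            {q : ℝ × (Fin n → ℝ) | q.1 + ∑ i, q.2 i ≤ t}) := by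
        ext q; simp [hQ, Set.mem_iInter]
      rw [h1]
      refine (isClosed_le continuous_const continuous_fst).inter
        ((isClosed_iInter fun i => isClosed_le continuous_const
          ((continuous_apply i).comp continuous_snd)).inter
          (isClosed_le (continuous_fst.add
            (continuous_finset_sum _ fun i _ => (continuous_apply i).comp continuous_snd))
            continuous_const))
    have hmp := measurePreserving_piFinSuccAbove (fun _ : Fin (n+1) => (volume : Measure ℝ)) 0
    have hpre : (MeasurableEquiv.piFinSuccAbove (fun _ : Fin (n+1) => ℝ) 0) ⁻¹' Q
        = {y : Fin (n+1) → ℝ | (∀ i, 0 ≤ y i) ∧ ∑ i, y i ≤ t} := by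
      ext y
      simp only [Set.mem_preimage, hQ, Set.mem_setOf_eq,
        MeasurableEquiv.piFinSuccAbove, MeasurableEquiv.coe_mk, Fin.insertNthEquiv, Equiv.coe_fn_symm_mk,
        Fin.removeNth, Fin.succAbove_zero]
      rw [Fin.forall_fin_succ, Fin.sum_univ_succ]
      exact ⟨fun h => ⟨⟨h.1, h.2.1⟩, h.2.2⟩, fun h => ⟨h.1.1, h.1.2, h.2⟩⟩
    have hvol : volume {y : Fin (n+1) → ℝ | (∀ i, 0 ≤ y i) ∧ ∑ i, y i ≤ t}
        = (volume.prod (volume : Measure (Fin n → ℝ))) Q := by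
      rw [← hpre]
      exact hmp.measure_preimage hQclosed.measurableSet.nullMeasurableSet
    rw [hvol, Measure.prod_apply hQclosed.measurableSet]
    have hslice : ∀ a : ℝ, volume (Prod.mk a ⁻¹' Q)
        = Set.indicator (Set.Icc 0 t)
            (fun a => ENNReal.ofReal ((t - a) ^ n / n.factorial)) a := by
      intro a
      by_cases ha : 0 ≤ a
      · by_cases hat : a ≤ t
        · have hs : Prod.mk a ⁻¹' Q
              = {y : Fin n → ℝ | (∀ i, 0 ≤ y i) ∧ ∑ i, y i ≤ t - a} := by
            ext y
            simp only [Set.mem_preimage, hQ, Set.mem_setOf_eq, ha, true_and]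
            constructor
            · rintro ⟨h1, h2⟩; exact ⟨h1, by linarith⟩
            · rintro ⟨h1, h2⟩; exact ⟨h1, by linarith⟩
          rw [hs, ih _ (by linarith), Set.indicator_of_mem (Set.mem_Icc.mpr ⟨ha, hat⟩)]
        · have hs : Prod.mk a ⁻¹' Q = ∅ := by
            ext y
            simp only [Set.mem_preimage, hQ, Set.mem_setOf_eq, Set.mem_empty_iff_false,
              iff_false, not_and]
            intro _ hy hsum
            have : (0:ℝ) ≤ ∑ i, y i := Finset.sum_nonneg fun i _ => hy i
            linarith
          rw [hs, Set.indicator_of_notMem (fun h => hat h.2)]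
          simp
      · have hs : Prod.mk a ⁻¹' Q = ∅ := by
          ext y
          simp only [Set.mem_preimage, hQ, Set.mem_setOf_eq, Set.mem_empty_iff_false,
            iff_false, not_and]
          intro h; exact absurd h ha
        rw [hs, Set.indicator_of_notMem (fun h => ha h.1)]
        simp
    simp_rw [hslice]
    rw [lintegral_indicator measurableSet_Icc]
    have hint : ∫⁻ a in Set.Icc (0:ℝ) t, ENNReal.ofReal ((t - a) ^ n / n.factorial)
        = ENNReal.ofReal (∫ a in Set.Icc (0:ℝ) t, (t - a) ^ n / n.factorial) := by
      rw [ofReal_integral_eq_lintegral_ofReal]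
      · exact (((continuous_const.sub continuous_id).pow n).div_const _).integrableOn_Icc
      · refine (ae_restrict_iff' measurableSet_Icc).2 (ae_of_all _ fun a ha => ?_)
        have : (0:ℝ) ≤ (t - a) ^ n := pow_nonneg (by linarith [ha.2]) n
        positivity
    rw [hint]
    have hcalc : ∫ a in Set.Icc (0:ℝ) t, (t - a) ^ n / n.factorial
        = t ^ (n+1) / (n+1).factorial := by
      rw [integral_Icc_eq_integral_Ioc, ← intervalIntegral.integral_of_le ht]
      rw [intervalIntegral.integral_div]
      have := intervalIntegral.integral_comp_sub_left (fun x : ℝ => x ^ n) t (a := 0) (b := t)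
      simp only [sub_self, sub_zero] at this
      rw [this, integral_pow]
      have hfact : ((n+1).factorial : ℝ) = (n+1) * n.factorial := by
        rw [Nat.factorial_succ]; push_cast; ring
      have hnf : (n.factorial : ℝ) ≠ 0 := Nat.cast_ne_zero.2 n.factorial_ne_zero
      rw [hfact]
      field_simp
      simp
    rw [hcalc]

lemma sumCoeff_apply (p : ℕ) (b : Fin (p + 1) → ℕ) (w : Fin (p + 1) → ℤ) :
    sumCoeff p b w = ∑ i, (b i : ℤ) * w i := by
  simp [sumCoeff, LinearMap.sum_apply, LinearMap.smul_apply, smul_eq_mul]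

lemma exists_bezout {ι : Type*} [DecidableEq ι] (s : Finset ι) (b : ι → ℕ) :
    ∃ u : ι → ℤ, ∑ i ∈ s, (b i : ℤ) * u i = ((s.gcd b : ℕ) : ℤ) := by
  classical
  induction s using Finset.induction_on with
  | empty => exact ⟨0, by simp⟩
  | @insert a s ha ih =>
    obtain ⟨u, hu⟩ := ih
    set g := s.gcd b
    refine ⟨fun i => if i = a then Nat.gcdA (b a) g else Nat.gcdB (b a) g * u i, ?_⟩
    rw [Finset.sum_insert ha, Finset.gcd_insert]
    have h1 : ∑ i ∈ s, (b i : ℤ) * (if i = a then Nat.gcdA (b a) g else Nat.gcdB (b a) g * u i)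
        = Nat.gcdB (b a) g * ∑ i ∈ s, (b i : ℤ) * u i := by
      rw [Finset.mul_sum]
      refine Finset.sum_congr rfl fun i hi => ?_
      rw [if_neg (by rintro rfl; exact ha hi)]
      ring
    rw [h1, hu]
    simp only [if_pos rfl, if_true]
    have hb := Nat.gcd_eq_gcd_ab (b a) g
    have hgcd : gcd (b a) (s.gcd b) = Nat.gcd (b a) g := rfl
    rw [hgcd, hb]
    ring

lemma gcd_pos (p : ℕ) (b : Fin (p + 1) → ℕ) (hb : ∀ i, 0 < b i) :
    0 < Finset.univ.gcd b := by
  rcases Nat.eq_zero_or_pos (Finset.univ.gcd b) with h | h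
  · exfalso
    have := (Finset.gcd_eq_zero_iff).1 h 0 (Finset.mem_univ 0)
    exact (hb 0).ne' this
  · exact h

lemma det_key (p : ℕ) (b : Fin (p + 1) → ℕ) (hb : ∀ i, 0 < b i)
    (v : Module.Basis (Fin p) ℤ (LinearMap.ker (sumCoeff p b))) :
    ((Finset.univ.gcd b : ℕ) : ℤ) *
      |(Matrix.of fun i j : Fin p => ((v j : Fin (p + 1) → ℤ) i.succ)).det| = (b 0 : ℤ) := by
  classical
  set g : ℕ := Finset.univ.gcd b with hg
  have hgpos : 0 < g := gcd_pos p b hb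
  obtain ⟨u, hu⟩ := exists_bezout (Finset.univ : Finset (Fin (p+1))) b
  have hfu : sumCoeff p b u = (g : ℤ) := by rw [sumCoeff_apply]; exact hu
  have hgdvd : ∀ w : Fin (p+1) → ℤ, (g : ℤ) ∣ sumCoeff p b w := by
    intro w
    rw [sumCoeff_apply]
    refine Finset.dvd_sum fun i _ => Dvd.dvd.mul_right ?_ _
    exact_mod_cast Int.natCast_dvd_natCast.2 (Finset.gcd_dvd (Finset.mem_univ i))
  set w' : Fin (p+1) → (Fin (p+1) → ℤ) := Fin.cases u (fun j => (v j : Fin (p+1) → ℤ)) with hw'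
  -- span
  have hspan : ⊤ ≤ Submodule.span ℤ (Set.range w') := by
    intro w _
    have hker : w - (sumCoeff p b w / g) • u ∈ LinearMap.ker (sumCoeff p b) := by
      rw [LinearMap.mem_ker, map_sub, LinearMap.map_smul, hfu, smul_eq_mul,
        Int.ediv_mul_cancel (hgdvd w), sub_self]
    have hkspan : w - (sumCoeff p b w / g) • u
        ∈ Submodule.span ℤ (Set.range fun j => ((v j : Fin (p+1) → ℤ))) := by
      have h1 : (⟨_, hker⟩ : LinearMap.ker (sumCoeff p b)) ∈ Submodule.span ℤ (Set.range v) := by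
        rw [v.span_eq]; trivial
      have h2 := Submodule.mem_map_of_mem (f := (LinearMap.ker (sumCoeff p b)).subtype) h1
      rw [Submodule.map_span, ← Set.range_comp] at h2
      exact h2
    have husub : u ∈ Submodule.span ℤ (Set.range w') :=
      Submodule.subset_span ⟨0, rfl⟩
    have hvsub : Submodule.span ℤ (Set.range fun j => ((v j : Fin (p+1) → ℤ)))
        ≤ Submodule.span ℤ (Set.range w') := by
      refine Submodule.span_mono ?_
      rintro _ ⟨j, rfl⟩
      exact ⟨j.succ, by simp [hw']⟩
    have := Submodule.add_mem _ (Submodule.smul_mem _ (sumCoeff p b w / g) husub)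
      (hvsub hkspan)
    simpa using this
  -- linear independence
  have hli : LinearIndependent ℤ w' := by
    rw [Fintype.linearIndependent_iff]
    intro c hc
    have hsum : c 0 • u + ∑ j : Fin p, c j.succ • ((v j : Fin (p+1) → ℤ)) = 0 := by
      rw [← hc, Fin.sum_univ_succ]
      simp [hw']
    have hc0 : c 0 = 0 := by
      have := congrArg (sumCoeff p b) hsum
      rw [map_add, LinearMap.map_smul, hfu, map_sum] at this
      simp only [LinearMap.map_smul, LinearMap.map_coe_ker, smul_zero, mul_zero,
        Finset.sum_const_zero, add_zero, map_zero, smul_eq_mul] at this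
      exact (mul_eq_zero.1 this).resolve_right (by exact_mod_cast hgpos.ne' : (g:ℤ) ≠ 0)
    have hrest : ∑ j : Fin p, c j.succ • (v j) = 0 := by
      apply Subtype.coe_injective
      rw [hc0] at hsum
      simp only [Submodule.coe_sum, SetLike.val_smul, ZeroMemClass.coe_zero]
      simpa using hsum
    have hcs : ∀ j : Fin p, c j.succ = 0 :=
      Fintype.linearIndependent_iff.1 v.linearIndependent _ hrest
    intro k
    refine Fin.cases hc0 hcs k
  set Bb : Module.Basis (Fin (p+1)) ℤ (Fin (p+1) → ℤ) := Module.Basis.mk hli hspan with hBb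
  set B : Matrix (Fin (p+1)) (Fin (p+1)) ℤ := Matrix.of fun i k => w' k i with hB
  have hBdet : IsUnit B.det := by
    have h := Module.Basis.isUnit_det (Pi.basisFun ℤ (Fin (p+1))) Bb
    rw [Module.Basis.det_apply] at h
    have : (Pi.basisFun ℤ (Fin (p+1))).toMatrix ⇑Bb = B := by
      ext i j
      rw [Module.Basis.toMatrix_apply]
      simp [hBb, hB, Module.Basis.coe_mk]
    rwa [this] at h
  set R : Matrix (Fin (p+1)) (Fin (p+1)) ℤ :=
    Matrix.of (fun i k => if i = 0 then (b k : ℤ) else if i = k then 1 else 0) with hR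
  have hdetR : R.det = (b 0 : ℤ) := by
    have hsub : R.submatrix Fin.succ Fin.succ = 1 := by
      ext i j
      simp only [hR, Matrix.submatrix_apply, Matrix.of_apply, Matrix.one_apply, Fin.succ_inj]
      rw [if_neg (Fin.succ_ne_zero i)]
    rw [Matrix.det_succ_column_zero, Finset.sum_eq_single 0]
    · rw [Fin.succAbove_zero, hsub, Matrix.det_one]
      simp [hR]
    · intro i _ hi
      have h0 : R i 0 = 0 := by
        simp only [hR, Matrix.of_apply]
        rw [if_neg hi, if_neg hi]
      rw [h0]
      ring
    · simp
  set N : Matrix (Fin p) (Fin p) ℤ :=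
    Matrix.of (fun i j : Fin p => ((v j : Fin (p + 1) → ℤ) i.succ)) with hN
  have hRB0 : ∀ k, (R * B) 0 k = if k = 0 then (g : ℤ) else 0 := by
    intro k
    rw [Matrix.mul_apply]
    have h1 : ∀ m, R 0 m * B m k = (b m : ℤ) * w' k m := by
      intro m; simp [hR, hB]
    rw [Finset.sum_congr rfl (fun m _ => h1 m), ← sumCoeff_apply]
    refine Fin.cases ?_ ?_ k
    · have : w' 0 = u := by simp [hw']
      rw [this, hfu]
      simp
    · intro j
      have : w' j.succ = (v j : Fin (p + 1) → ℤ) := by simp [hw']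
      rw [this, if_neg (Fin.succ_ne_zero j)]
      exact LinearMap.map_coe_ker _ (v j)
  have hRBs : ∀ (i : Fin p) (k : Fin (p + 1)), (R * B) i.succ k = B i.succ k := by
    intro i k
    rw [Matrix.mul_apply, Finset.sum_eq_single i.succ]
    · have h0 : R i.succ i.succ = 1 := by
        simp only [hR, Matrix.of_apply]
        rw [if_neg (Fin.succ_ne_zero i)]
        simp
      rw [h0, one_mul]
    · intro m _ hm
      have h0 : R i.succ m = 0 := by
        simp only [hR, Matrix.of_apply]
        rw [if_neg (Fin.succ_ne_zero i), if_neg (fun h => hm h.symm)]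
      rw [h0, zero_mul]
    · simp
  have hdetRB : (R * B).det = (g : ℤ) * N.det := by
    rw [Matrix.det_succ_row_zero, Finset.sum_eq_single 0]
    · have hsub2 : (R * B).submatrix Fin.succ (Fin.succAbove 0) = N := by
        ext i j
        simp only [Matrix.submatrix_apply, Fin.succAbove_zero]
        rw [hRBs]
        simp [hB, hw', hN]
      rw [hsub2, hRB0 0, if_pos rfl]
      simp
    · intro j _ hj
      rw [hRB0 j, if_neg hj]
      ring
    · simp
  have key : (g : ℤ) * N.det = (b 0 : ℤ) * B.det := by
    rw [← hdetRB, Matrix.det_mul, hdetR]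
  have hg' : (0 : ℤ) < (g : ℤ) := by exact_mod_cast hgpos
  have hb0' : (0 : ℤ) < (b 0 : ℤ) := by exact_mod_cast hb 0
  rcases Int.isUnit_iff.1 hBdet with h1 | h1
  · rw [h1, mul_one] at key
    have hpos : 0 < N.det := by
      rcases lt_trichotomy N.det 0 with h | h | h
      · exfalso; have := mul_neg_of_pos_of_neg hg' h; linarith
      · exfalso; rw [h, mul_zero] at key; linarith
      · exact h
    rw [abs_of_pos hpos]
    linarith
  · rw [h1, mul_neg_one] at key
    have hneg : N.det < 0 := by
      rcases lt_trichotomy N.det 0 with h | h | h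
      · exact h
      · exfalso; rw [h, mul_zero] at key; linarith
      · exfalso; have := mul_pos hg' h; linarith
    rw [abs_of_neg hneg, mul_neg]
    linarith

lemma part1 (p : ℕ) (b : Fin (p + 1) → ℕ) (hb : ∀ i, 0 < b i) :
    IsGreatest {k : ℕ | 0 < k ∧ ∃ (a : Fin (p + 1) → ℤ) (c : ℤ),
        ∀ w : Fin (p + 1) → ℝ, (∀ i, 0 ≤ w i) → (∑ i, (b i : ℝ) * w i = 1) →
          ∑ i, (a i : ℝ) * w i + (c : ℝ) = (k : ℝ)⁻¹}
      (Finset.univ.gcd b) := by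
  have hg : 0 < Finset.univ.gcd b := gcd_pos p b hb
  set g := Finset.univ.gcd b with hgdef
  constructor
  · refine ⟨hg, fun i => ((b i / g : ℕ) : ℤ), 0, fun w _ hw => ?_⟩
    have hcast : ∀ i, (((b i / g : ℕ) : ℤ) : ℝ) = (b i : ℝ) / (g : ℝ) := by
      intro i
      have hdvd : g ∣ b i := Finset.gcd_dvd (Finset.mem_univ i)
      rw [Int.cast_natCast, Nat.cast_div hdvd (by exact_mod_cast hg.ne' : (g:ℝ) ≠ 0)]
    have : ∑ i, (((b i / g : ℕ) : ℤ) : ℝ) * w i = (∑ i, (b i : ℝ) * w i) / g := by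
      rw [Finset.sum_div]
      exact Finset.sum_congr rfl fun i _ => by rw [hcast i]; ring
    rw [this, hw]
    simp
  · rintro k ⟨hk, a, c, h⟩
    have hdvd : ∀ i, k ∣ b i := by
      intro i
      have hbne : (b i : ℝ) ≠ 0 := by exact_mod_cast (hb i).ne'
      have hkne : (k : ℝ) ≠ 0 := by exact_mod_cast hk.ne'
      set w : Fin (p+1) → ℝ := fun j => if j = i then (b i : ℝ)⁻¹ else 0 with hwdef
      have hnn : ∀ j, 0 ≤ w j := by
        intro j
        simp only [hwdef]
        split <;> positivity
      have hsum1 : ∑ j, (b j : ℝ) * w j = 1 := by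
        rw [Finset.sum_eq_single i]
        · simp [hwdef, mul_inv_cancel₀ hbne]
        · intro j _ hj; simp [hwdef, hj]
        · simp
      have h1 := h w hnn hsum1
      have hsum : ∑ j, (a j : ℝ) * w j = (a i : ℝ) * (b i : ℝ)⁻¹ := by
          rw [Finset.sum_eq_single i]
          · simp [hwdef]
          · intro j _ hj; simp [hwdef, hj]
          · simp
      rw [hsum] at h1
      have e2 : (a i : ℝ) * k + c * (b i) * k = b i := by
        field_simp at h1
        linarith
      have e3 : ((a i * k + c * b i * k : ℤ) : ℝ) = ((b i : ℤ) : ℝ) := by push_cast; linarith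
      have e4 : (a i * k + c * b i * k : ℤ) = (b i : ℤ) := by exact_mod_cast e3
      have : (k : ℤ) ∣ (b i : ℤ) := ⟨a i + c * b i, by linarith [e4]⟩
      exact_mod_cast this
    exact Nat.le_of_dvd hg (Finset.dvd_gcd fun i _ => hdvd i)

lemma part2 (p : ℕ) (b : Fin (p + 1) → ℕ) (hb : ∀ i, 0 < b i)
    (v : Module.Basis (Fin p) ℤ (LinearMap.ker (sumCoeff p b))) (w0 : Fin (p + 1) → ℝ)
    (hw0 : ∑ i, (b i : ℝ) * w0 i = 1) :
    volume ((fun x : Fin p → ℝ => fun i => w0 i + ∑ j, x j * ((v j : Fin (p + 1) → ℤ) i : ℝ))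
        ⁻¹' {w : Fin (p + 1) → ℝ | (∀ i, 0 ≤ w i) ∧ ∑ i, (b i : ℝ) * w i = 1})
      = ENNReal.ofReal (((Finset.univ.gcd b : ℕ) : ℝ) / (p.factorial * ∏ i, (b i : ℝ))) := by
  classical
  set g := Finset.univ.gcd b with hgdef
  have hg : 0 < g := gcd_pos p b hb
  have hgR : (0:ℝ) < g := by exact_mod_cast hg
  set V : Fin p → Fin (p + 1) → ℝ := fun j i => ((v j : Fin (p + 1) → ℤ) i : ℝ) with hV
  have hVsum : ∀ j : Fin p, ∑ i, (b i : ℝ) * V j i = 0 := by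
    intro j
    have h1 : sumCoeff p b (v j) = 0 := LinearMap.map_coe_ker _ (v j)
    rw [sumCoeff_apply] at h1
    have := congrArg (Int.cast : ℤ → ℝ) h1
    push_cast at this
    simpa [hV] using this
  set W : (Fin p → ℝ) → Fin (p + 1) → ℝ := fun x i => w0 i + ∑ j, x j * V j i with hW
  have hWsum : ∀ x, ∑ i, (b i : ℝ) * W x i = 1 := by
    intro x
    have h2 : ∑ i, (b i : ℝ) * W x i
        = (∑ i, (b i : ℝ) * w0 i) + ∑ j, x j * ∑ i, (b i : ℝ) * V j i := by
      simp only [hW, mul_add, Finset.sum_add_distrib]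
      congr 1
      simp_rw [Finset.mul_sum]
      rw [Finset.sum_comm]
      exact Finset.sum_congr rfl fun j _ => Finset.sum_congr rfl fun i _ => by ring
    rw [h2, hw0]
    simp [hVsum]
  set M : Matrix (Fin p) (Fin p) ℝ :=
    Matrix.of (fun i j => (b i.succ : ℝ) * V j i.succ) with hM
  set Nr : Matrix (Fin p) (Fin p) ℝ := Matrix.of (fun i j => V j i.succ) with hNr
  have hNrdet : |Nr.det| = (b 0 : ℝ) / g := by
    have hkey := det_key p b hb v
    have hmap : Nr = (Matrix.of fun i j : Fin p =>
        ((v j : Fin (p + 1) → ℤ) i.succ)).map (Int.cast : ℤ → ℝ) := by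
      ext i j; simp [hNr, hV]
    have hdetmap : Nr.det = (((Matrix.of fun i j : Fin p =>
        ((v j : Fin (p + 1) → ℤ) i.succ)).det : ℤ) : ℝ) := by
      rw [hmap]
      exact ((Int.castRingHom ℝ).map_det _).symm
    rw [hdetmap, ← Int.cast_abs]
    rw [eq_div_iff hgR.ne']
    rw [mul_comm]
    exact_mod_cast hkey
  have hMN : M = Matrix.diagonal (fun i => (b i.succ : ℝ)) * Nr := by
    ext i j
    rw [Matrix.diagonal_mul]
    simp [hM, hNr]
  have hprodpos : (0:ℝ) < ∏ i : Fin p, (b i.succ : ℝ) := by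
    apply Finset.prod_pos; intro i _; exact_mod_cast hb i.succ
  have hprodpos' : (0:ℝ) < ∏ i, (b i : ℝ) := by
    apply Finset.prod_pos; intro i _; exact_mod_cast hb i
  have habs : |M.det| = (∏ i, (b i : ℝ)) / g := by
    rw [hMN, Matrix.det_mul, Matrix.det_diagonal, abs_mul, hNrdet,
      abs_of_pos hprodpos, Fin.prod_univ_succ]
    field_simp
  have hMdet_ne : M.det ≠ 0 := by
    intro h
    rw [h, abs_zero] at habs
    have : (0:ℝ) < (∏ i, (b i : ℝ)) / g := div_pos hprodpos' hgR
    linarith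
  set c : Fin p → ℝ := fun i => (b i.succ : ℝ) * w0 i.succ with hc
  have hMc : ∀ (x : Fin p → ℝ) (i : Fin p),
      Matrix.toLin' M x i + c i = (b i.succ : ℝ) * W x i.succ := by
    intro x i
    rw [Matrix.toLin'_apply]
    have h6 : M.mulVec x i = ∑ j, (b i.succ : ℝ) * (x j * V j i.succ) := by
      simp only [Matrix.mulVec, dotProduct, hM, Matrix.of_apply]
      exact Finset.sum_congr rfl fun j _ => by ring
    rw [h6]
    simp only [hc, hW]
    rw [mul_add, Finset.mul_sum]
    exact add_comm _ _
  have hseteq : ((fun x : Fin p → ℝ =>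
        fun i => w0 i + ∑ j, x j * ((v j : Fin (p + 1) → ℤ) i : ℝ))
        ⁻¹' {w : Fin (p + 1) → ℝ | (∀ i, 0 ≤ w i) ∧ ∑ i, (b i : ℝ) * w i = 1})
      = ⇑(Matrix.toLin' M) ⁻¹'
          ((fun y => y + c) ⁻¹' {y : Fin p → ℝ | (∀ i, 0 ≤ y i) ∧ ∑ i, y i ≤ 1}) := by
    ext x
    simp only [Set.mem_preimage, Set.mem_setOf_eq, Pi.add_apply]
    have hCW : ∀ i : Fin p, Matrix.toLin' M x i + c i = (b i.succ : ℝ) * W x i.succ := hMc x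
    constructor
    · rintro ⟨hpos, -⟩
      constructor
      · intro i
        rw [hCW i]
        exact mul_nonneg (by positivity) (hpos i.succ)
      · have h3 : ∑ i : Fin p, ((Matrix.toLin' M) x i + c i)
            = 1 - (b 0 : ℝ) * W x 0 := by
          have h4 := hWsum x
          rw [Fin.sum_univ_succ] at h4
          rw [Finset.sum_congr rfl fun i _ => hCW i]
          linarith
        calc ∑ i : Fin p, ((Matrix.toLin' M) x i + c i)
            = 1 - (b 0 : ℝ) * W x 0 := h3
          _ ≤ 1 := by
              have : 0 ≤ (b 0 : ℝ) * W x 0 :=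
                mul_nonneg (by positivity) (hpos 0)
              linarith
    · rintro ⟨hpos, hsum⟩
      have hys : ∀ i : Fin p, 0 ≤ W x i.succ := by
        intro i
        have := hpos i
        rw [hCW i] at this
        have hbp : (0:ℝ) < (b i.succ : ℝ) := by exact_mod_cast hb i.succ
        exact nonneg_of_mul_nonneg_right this hbp
      have hy0 : 0 ≤ W x 0 := by
        have h3 : ∑ i : Fin p, ((Matrix.toLin' M) x i + c i)
            = 1 - (b 0 : ℝ) * W x 0 := by
          have h4 := hWsum x
          rw [Fin.sum_univ_succ] at h4
          rw [Finset.sum_congr rfl fun i _ => hCW i]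
          linarith
        rw [h3] at hsum
        have hbp : (0:ℝ) < (b 0 : ℝ) := by exact_mod_cast hb 0
        nlinarith
      refine ⟨?_, hWsum x⟩
      intro i
      refine Fin.cases hy0 hys i
  rw [hseteq]
  rw [Measure.addHaar_preimage_linearMap volume (by rwa [LinearMap.det_toLin']) _]
  rw [measure_preimage_add_right]
  rw [vol_simplex p 1 one_pos.le]
  rw [LinearMap.det_toLin', abs_inv, habs]
  rw [← ENNReal.ofReal_mul (by positivity)]
  congr 1
  rw [one_pow, inv_div, div_mul_div_comm, mul_one,
    mul_comm (∏ i, (b i : ℝ)) (p.factorial : ℝ)]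


theorem stmt0 (p : ℕ) (b : Fin (p + 1) → ℕ) (hb : ∀ i, 0 < b i) :
    IsGreatest {k : ℕ | 0 < k ∧ ∃ (a : Fin (p + 1) → ℤ) (c : ℤ),
        ∀ w : Fin (p + 1) → ℝ, (∀ i, 0 ≤ w i) → (∑ i, (b i : ℝ) * w i = 1) →
          ∑ i, (a i : ℝ) * w i + (c : ℝ) = (k : ℝ)⁻¹}
      (Finset.univ.gcd b) ∧
    ∀ (v : Module.Basis (Fin p) ℤ (LinearMap.ker (sumCoeff p b))) (w0 : Fin (p + 1) → ℝ),
      (∑ i, (b i : ℝ) * w0 i = 1) →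
      volume ((fun x : Fin p → ℝ => fun i => w0 i + ∑ j, x j * ((v j : Fin (p + 1) → ℤ) i : ℝ))
          ⁻¹' {w : Fin (p + 1) → ℝ | (∀ i, 0 ≤ w i) ∧ ∑ i, (b i : ℝ) * w i = 1})
        = ENNReal.ofReal (((Finset.univ.gcd b : ℕ) : ℝ) / (p.factorial * ∏ i, (b i : ℝ))) :=
  ⟨part1 p b hb, fun v w0 hw0 => part2 p b hb v w0 hw0⟩
end

section
/- Let b_0,…,b_p be positive integers, let σ' = {w' ∈ ℝ_{≥0}^{p+1} : ∑_i w'_i = 1} be the standard simplex with lattice T_{σ',ℤ} = {w ∈ ℤ^{p+1} : ∑_i w_i = 0}, and let φ: ℝ^{p+1} → ℝ^{p+1} be the linear isomorphism φ(w)_j = b_j w_j. Let T_{σ,ℤ} = {w ∈ ℤ^{p+1} : ∑_i b_i w_i = 0}. Then the index [T_{σ',ℤ} : φ(T_{σ,ℤ})] equals (∏_i b_i)/gcd(b_0,…,b_p). -/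
/- STATEMENT 1: For positive integers b_0,…,b_p, the linear isomorphism
φ(w)_j = b_j w_j maps T_{σ,ℤ} = {w ∈ ℤ^{p+1} : ∑ b_i w_i = 0} into
T_{σ',ℤ} = {w ∈ ℤ^{p+1} : ∑ w_i = 0}, with index
[T_{σ',ℤ} : φ(T_{σ,ℤ})] = (∏ b_i)/gcd(b_i). -/

/-- φ(w)_j = b_j w_j. -/
noncomputable def mulMap (p : ℕ) (b : Fin (p + 1) → ℕ) :
    (Fin (p + 1) → ℤ) →ₗ[ℤ] (Fin (p + 1) → ℤ) :=
  LinearMap.pi fun j => (b j : ℤ) • LinearMap.proj j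

/-- Bezout for finitely many natural numbers, with integer coefficients. -/
lemma finset_gcd_bezout {ι : Type*} [DecidableEq ι] (s : Finset ι) (f : ι → ℕ) :
    ∃ c : ι → ℤ, ∑ i ∈ s, c i * (f i : ℤ) = ((s.gcd f : ℕ) : ℤ) := by
  induction s using Finset.induction with
  | empty => exact ⟨0, by simp⟩
  | @insert a s ha ih =>
    obtain ⟨c, hc⟩ := ih
    set A := Nat.gcdA (f a) (s.gcd f)
    set B := Nat.gcdB (f a) (s.gcd f)
    refine ⟨Function.update (fun i => B * c i) a A, ?_⟩
    rw [Finset.sum_insert ha, Function.update_self,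
      Finset.sum_congr rfl (fun i hi => by
        rw [Function.update_of_ne (ne_of_mem_of_not_mem hi ha)]),
      Finset.gcd_insert]
    have : ∑ i ∈ s, B * c i * (f i : ℤ) = B * ((s.gcd f : ℕ) : ℤ) := by
      rw [← hc, Finset.mul_sum]
      exact Finset.sum_congr rfl fun i _ => by ring
    rw [this]
    have hg : GCDMonoid.gcd (f a) (s.gcd f) = Nat.gcd (f a) (s.gcd f) := rfl
    rw [hg, Nat.gcd_eq_gcd_ab]
    ring

theorem stmt1 (p : ℕ) (b : Fin (p + 1) → ℕ) (hb : ∀ i, 0 < b i) :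
    AddSubgroup.relIndex
      (Submodule.map (mulMap p b)
        (LinearMap.ker (∑ i, (b i : ℤ) •
          (LinearMap.proj i : (Fin (p + 1) → ℤ) →ₗ[ℤ] ℤ)))).toAddSubgroup
      (LinearMap.ker (∑ i : Fin (p + 1),
        (LinearMap.proj i : (Fin (p + 1) → ℤ) →ₗ[ℤ] ℤ))).toAddSubgroup
      = (∏ i, b i) / Finset.univ.gcd b := by
  classical
  set g : ℕ := Finset.univ.gcd b with hgdef
  have hg0 : 0 < g := by
    rcases Nat.eq_zero_or_pos g with h | h
    · exfalso
      have := (Finset.gcd_eq_zero_iff.mp (hgdef ▸ h)) 0 (Finset.mem_univ 0)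
      exact (hb 0).ne' this
    · exact h
  set K : AddSubgroup (Fin (p + 1) → ℤ) :=
    (LinearMap.ker (∑ i : Fin (p + 1),
      (LinearMap.proj i : (Fin (p + 1) → ℤ) →ₗ[ℤ] ℤ))).toAddSubgroup with hK
  set M : AddSubgroup (Fin (p + 1) → ℤ) :=
    AddSubgroup.pi Set.univ (fun j => AddSubgroup.zmultiples ((b j : ℤ))) with hM
  have memK : ∀ v : Fin (p + 1) → ℤ, v ∈ K ↔ ∑ i, v i = 0 := by
    intro v
    simp [hK, Submodule.mem_toAddSubgroup, LinearMap.mem_ker, LinearMap.sum_apply]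
  have memM : ∀ v : Fin (p + 1) → ℤ, v ∈ M ↔ ∀ j, (b j : ℤ) ∣ v j := by
    intro v
    simp [hM, AddSubgroup.mem_pi, Int.mem_zmultiples_iff]
  -- The image is K ⊓ M
  have himg : (Submodule.map (mulMap p b)
      (LinearMap.ker (∑ i, (b i : ℤ) •
        (LinearMap.proj i : (Fin (p + 1) → ℤ) →ₗ[ℤ] ℤ)))).toAddSubgroup = K ⊓ M := by
    ext v
    simp only [Submodule.mem_toAddSubgroup, Submodule.mem_map, LinearMap.mem_ker,
      AddSubgroup.mem_inf, memK, memM]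
    constructor
    · rintro ⟨w, hw, rfl⟩
      have happ : ∀ j, mulMap p b w j = (b j : ℤ) * w j := fun j => rfl
      constructor
      · simp only [happ]
        simpa [LinearMap.sum_apply] using hw
      · intro j; rw [happ]; exact Dvd.intro _ rfl
    · rintro ⟨hsum, hdvd⟩
      choose k hk using hdvd
      refine ⟨k, ?_, ?_⟩
      · have : ∑ i, (b i : ℤ) * k i = ∑ i, v i := by
          refine Finset.sum_congr rfl fun i _ => (hk i).symm
        simpa [LinearMap.sum_apply, this] using hsum
      · funext j
        exact (hk j).symm
  rw [himg, AddSubgroup.inf_relIndex_left]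
  -- second isomorphism
  have h2 : M.relIndex K = M.relIndex (K ⊔ M) := (AddSubgroup.relIndex_sup_right K M).symm
  -- index of M
  have hMindex : M.index = ∏ i, b i := by
    rw [hM, AddSubgroup.index_pi]
    refine Finset.prod_congr rfl fun i _ => ?_
    rw [Int.index_zmultiples, Int.natAbs_natCast]
  -- K ⊔ M = comap of zmultiples g under the sum homomorphism
  set S : (Fin (p + 1) → ℤ) →+ ℤ :=
    (∑ i : Fin (p + 1),
      (LinearMap.proj i : (Fin (p + 1) → ℤ) →ₗ[ℤ] ℤ)).toAddMonoidHom with hS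
  have hSapp : ∀ v : Fin (p + 1) → ℤ, S v = ∑ i, v i := by
    intro v; simp [hS, LinearMap.sum_apply]
  have hSsurj : Function.Surjective S := by
    intro t
    refine ⟨Pi.single 0 t, ?_⟩
    rw [hSapp]
    simp
  have hsup : K ⊔ M = AddSubgroup.comap S (AddSubgroup.zmultiples ((g : ℤ))) := by
    apply le_antisymm
    · refine sup_le ?_ ?_
      · intro v hv
        simp only [AddSubgroup.mem_comap, Int.mem_zmultiples_iff, hSapp]
        rw [(memK v).mp hv]
        exact dvd_zero _
      · intro v hv
        simp only [AddSubgroup.mem_comap, Int.mem_zmultiples_iff, hSapp]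
        refine Finset.dvd_sum fun i _ => ?_
        exact dvd_trans (Int.natCast_dvd_natCast.mpr (Finset.gcd_dvd (Finset.mem_univ i)))
          ((memM v).mp hv i)
    · intro v hv
      simp only [AddSubgroup.mem_comap, Int.mem_zmultiples_iff, hSapp] at hv
      obtain ⟨t, ht⟩ := hv
      obtain ⟨c, hc⟩ := finset_gcd_bezout Finset.univ b
      set m : Fin (p + 1) → ℤ := fun j => (t * c j) * (b j : ℤ) with hm
      have hmM : m ∈ M := (memM m).mpr fun j =>
        ⟨t * c j, by show t * c j * (b j : ℤ) = (b j : ℤ) * (t * c j); ring⟩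
      have hSm : ∑ i, m i = ∑ i, v i := by
        have h1 : ∑ i, m i = t * ∑ i : Fin (p + 1), c i * (b i : ℤ) := by
          rw [Finset.mul_sum]
          exact Finset.sum_congr rfl fun i _ => by
            show t * c i * (b i : ℤ) = _; ring
        rw [h1, hc, ht, ← hgdef]
        ring
      have hvK : v - m ∈ K := by
        rw [memK]
        simp [Finset.sum_sub_distrib, hSm]
      have : v = (v - m) + m := by ring
      rw [this]
      exact AddSubgroup.add_mem_sup hvK hmM
  have hsupindex : (K ⊔ M).index = g := by
    rw [hsup, AddSubgroup.index_comap_of_surjective _ hSsurj, Int.index_zmultiples,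
      Int.natAbs_natCast]
  have hmul := AddSubgroup.relIndex_mul_index (le_sup_right : M ≤ K ⊔ M)
  rw [hsupindex, hMindex, ← h2] at hmul
  exact (Nat.div_eq_of_eq_mul_left hg0 hmul.symm).symm
end

section
/- Let V be a compact Hausdorff space, Δ ⊂ V a compact subset, 𝔻_r the closed disc of radius r, and π: V → 𝔻_r a continuous map with π^{-1}(0) = Δ. Suppose Log: V → Δ is a continuous retraction (Log|_Δ = id). Let (μ_t)_{t ∈ 𝔻_r*} be probability measures with μ_t supported on π^{-1}(t), and μ_0 a probability measure on Δ. If Log_*μ_t → μ_0 weakly as measures on Δ as t → 0, then μ_t → μ_0 weakly as measures on V. -/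
/- STATEMENT 7: If the pushforwards Log_*μ_t of fiberwise-supported probability
measures on a compact Hausdorff space V converge weakly on Δ = π⁻¹(0), then the
measures μ_t themselves converge weakly on V. -/

open MeasureTheory Filter Topology

theorem stmt7
    {V : Type*} [TopologicalSpace V] [CompactSpace V] [T2Space V]
    [MeasurableSpace V] [BorelSpace V]
    (r : ℝ) (hr : 0 < r)
    (Δ : Set V) (π : V → ℂ) (hπ : Continuous π)
    (hrange : ∀ x, ‖π x‖ ≤ r)
    (hΔ : Δ = π ⁻¹' {0})
    (Log : V → V) (hLog : Continuous Log)
    (hLogΔ : ∀ x, Log x ∈ Δ) (hLogid : ∀ x ∈ Δ, Log x = x)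
    (μ : ℂ → Measure V)
    (hprob : ∀ t : ℂ, t ≠ 0 → ‖t‖ ≤ r → IsProbabilityMeasure (μ t))
    (hsupp : ∀ t : ℂ, t ≠ 0 → ‖t‖ ≤ r → μ t ((π ⁻¹' {t})ᶜ) = 0)
    (μ0 : Measure V) (hprob0 : IsProbabilityMeasure μ0) (hsupp0 : μ0 Δᶜ = 0)
    (hconv : ∀ f : V → ℝ, Continuous f →
      Tendsto (fun t => ∫ x, f (Log x) ∂(μ t))
        (𝓝[{t : ℂ | t ≠ 0 ∧ ‖t‖ ≤ r}] 0) (𝓝 (∫ x, f x ∂μ0))) :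
    ∀ f : V → ℝ, Continuous f →
      Tendsto (fun t => ∫ x, f x ∂(μ t))
        (𝓝[{t : ℂ | t ≠ 0 ∧ ‖t‖ ≤ r}] 0) (𝓝 (∫ x, f x ∂μ0)) := by

  intro f hf
  set S : Set ℂ := {t : ℂ | t ≠ 0 ∧ ‖t‖ ≤ r} with hS
  set g : V → ℝ := fun x => f x - f (Log x) with hgdef
  have hg : Continuous g := hf.sub (hf.comp hLog)
  have hgΔ : ∀ x ∈ Δ, g x = 0 := fun x hx => by simp [hgdef, hLogid x hx]
  have hdiff : Tendsto (fun t => ∫ x, g x ∂(μ t)) (𝓝[S] 0) (𝓝 0) := by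
    rw [NormedAddCommGroup.tendsto_nhds_zero]
    intro ε hε
    set U : Set V := {x | |g x| < ε / 2} with hUdef
    have hUopen : IsOpen U := isOpen_lt (continuous_abs.comp hg) continuous_const
    have hK : IsCompact Uᶜ := hUopen.isClosed_compl.isCompact
    have h0notin : (0 : ℂ) ∉ π '' Uᶜ := by
      rintro ⟨x, hx, hx0⟩
      have hxΔ : x ∈ Δ := by rw [hΔ]; exact hx0
      exact hx (by simp [hUdef, hgΔ x hxΔ, half_pos hε])
    have hnhds : (π '' Uᶜ)ᶜ ∈ 𝓝 (0 : ℂ) :=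
      (hK.image hπ).isClosed.isOpen_compl.mem_nhds h0notin
    filter_upwards [nhdsWithin_le_nhds hnhds, self_mem_nhdsWithin] with t ht htS
    obtain ⟨ht0, htr⟩ := htS
    haveI := hprob t ht0 htr
    have hμU : μ t Uᶜ = 0 := by
      refine measure_mono_null ?_ (hsupp t ht0 htr)
      intro x hx
      exact fun hxt => ht ⟨x, hx, hxt⟩
    have hbound : ‖∫ x, g x ∂(μ t)‖ ≤ ε / 2 * ((μ t) Set.univ).toReal := by
      apply norm_integral_le_of_norm_le_const
      rw [ae_iff]
      refine measure_mono_null (fun x hx => ?_) hμU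
      simp only [Set.mem_setOf_eq, not_le, Real.norm_eq_abs] at hx
      intro hxU
      exact absurd hx (not_lt.mpr hxU.le)
    have : ‖∫ x, g x ∂(μ t)‖ ≤ ε / 2 := by
      simpa [measure_univ] using hbound
    exact lt_of_le_of_lt this (half_lt_self hε)
  have hadd := (hconv f hf).add hdiff
  rw [add_zero] at hadd
  refine Tendsto.congr' ?_ hadd
  filter_upwards [self_mem_nhdsWithin] with t ⟨ht0, htr⟩
  haveI := hprob t ht0 htr
  have h1 : Integrable (fun x => f (Log x)) (μ t) := (hf.comp hLog).integrable_of_hasCompactSupport (HasCompactSupport.of_compactSpace _)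
  have h2 : Integrable g (μ t) := hg.integrable_of_hasCompactSupport (HasCompactSupport.of_compactSpace _)
  rw [← integral_add h1 h2]
  simp [hgdef]
end

section
/- Let σ = {w ∈ ℝ_{≥0}^{p+1} : ∑ b_i w_i = 1} and σ' = {w' ∈ ℝ_{≥0}^{p+1} : ∑ b_i w'_i = m}, the latter with integral affine structure given by the lattice M' = ℤ^{p+1} + ℤ(b_0/m,…,b_p/m). Under the homeomorphism σ' → σ, w = w'/m, one has: (i) the normalized volume satisfies Vol(σ') = m^{dim σ} Vol(σ); (ii) the integer b_{σ'} (largest integer whose reciprocal constant function is integral affine on σ') equals b_σ/gcd(m, b_σ), where b_σ = gcd(b_i). -/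
/- STATEMENT 12: Under the homeomorphism w = w'/m between
σ' = {∑ b_i w'_i = m} (with integral affine structure given by the lattice
M' = ℤ^{p+1} + ℤ(b_0/m,…,b_p/m)) and σ = {∑ b_i w_i = 1}:
(i) the normalized volume satisfies Vol(σ') = m^{dim σ} Vol(σ), the normalized
volumes being computed via any ℤ-basis of the tangent lattice
{v ∈ ℤ^{p+1} : ∑ b_i v_i = 0} and any basepoints on the two hyperplanes;
(ii) b_{σ'}, the largest integer whose reciprocal constant function is integral
affine on σ' for the M'-structure, equals b_σ/gcd(m, b_σ), where b_σ = gcd(b_i). -/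

open MeasureTheory
open Pointwise

noncomputable def sumCoeff12 (p : ℕ) (b : Fin (p + 1) → ℕ) : (Fin (p + 1) → ℤ) →ₗ[ℤ] ℤ :=
  ∑ i, (b i : ℤ) • LinearMap.proj i

lemma sumCoeff12_apply (p : ℕ) (b : Fin (p + 1) → ℕ) (u : Fin (p + 1) → ℤ) :
    sumCoeff12 p b u = ∑ i, (b i : ℤ) * u i := by
  simp [sumCoeff12, smul_eq_mul]


lemma intvec_mem {q : ℕ} (x : Fin q → ℚ) (hx : ∀ i, ∃ n : ℤ, x i = n) :
    x ∈ AddSubgroup.closure (Set.range fun i : Fin q => (Pi.single i 1 : Fin q → ℚ)) := by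
  choose n hn using hx
  have hx' : x = ∑ i, n i • (Pi.single i 1 : Fin q → ℚ) := by
    funext j
    simp only [Finset.sum_apply, Pi.smul_apply, Pi.single_apply, smul_eq_mul]
    rw [Finset.sum_eq_single j]
    · simp [hn j]
    · intro i _ hij; simp [Ne.symm hij]
    · simp
  rw [hx']
  refine AddSubgroup.sum_mem _ fun i _ => AddSubgroup.zsmul_mem _ ?_ _
  exact AddSubgroup.subset_closure ⟨i, rfl⟩

lemma coords_int {q : ℕ} (x : Fin q → ℚ)
    (hx : x ∈ AddSubgroup.closure (Set.range fun i : Fin q => (Pi.single i 1 : Fin q → ℚ))) :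
    ∀ i, ∃ n : ℤ, x i = n := by
  induction hx using AddSubgroup.closure_induction with
  | mem y hy =>
    obtain ⟨i, rfl⟩ := hy
    intro j
    rcases eq_or_ne j i with h | h
    · exact ⟨1, by subst h; simp⟩
    · exact ⟨0, by simp [Pi.single_apply, h]⟩
  | zero => exact fun i => ⟨0, rfl⟩
  | add a b _ _ ha hb =>
    intro i
    obtain ⟨n, hn⟩ := ha i; obtain ⟨n', hn'⟩ := hb i
    exact ⟨n + n', by simp [Pi.add_apply, hn, hn']⟩
  | neg a _ ha =>
    intro i
    obtain ⟨n, hn⟩ := ha i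
    exact ⟨-n, by simp [Pi.neg_apply, hn]⟩

lemma part1_s12 (p m : ℕ) (hm : 0 < m) (b : Fin (p + 1) → ℕ) (hb : ∀ i, 0 < b i)
    (v : Module.Basis (Fin p) ℤ (LinearMap.ker (sumCoeff12 p b))) (w0 w0' : Fin (p + 1) → ℝ)
    (h1 : ∑ i, (b i : ℝ) * w0 i = 1) (h2 : ∑ i, (b i : ℝ) * w0' i = m) :
      volume ((fun x : Fin p → ℝ => fun i => w0' i + ∑ j, x j * ((v j : Fin (p + 1) → ℤ) i : ℝ))
          ⁻¹' {w : Fin (p + 1) → ℝ | (∀ i, 0 ≤ w i) ∧ ∑ i, (b i : ℝ) * w i = m})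
        = (m : ENNReal) ^ p *
          volume ((fun x : Fin p → ℝ => fun i => w0 i + ∑ j, x j * ((v j : Fin (p + 1) → ℤ) i : ℝ))
            ⁻¹' {w : Fin (p + 1) → ℝ | (∀ i, 0 ≤ w i) ∧ ∑ i, (b i : ℝ) * w i = 1}) := by
  have hmR : (0 : ℝ) < m := by exact_mod_cast hm
  have hbR : ∀ i, (0 : ℝ) < b i := fun i => by exact_mod_cast hb i
  have hb0 : (b 0 : ℝ) ≠ 0 := (hbR 0).ne'
  -- kernel vectors sum to zero against b
  have hker : ∀ j : Fin p, ∑ i, (b i : ℝ) * ((v j : Fin (p + 1) → ℤ) i : ℝ) = 0 := by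
    intro j
    have h := (v j).2
    rw [LinearMap.mem_ker, sumCoeff12_apply] at h
    have : ((∑ i, (b i : ℤ) * (v j : Fin (p + 1) → ℤ) i : ℤ) : ℝ) = 0 := by rw [h]; simp
    push_cast at this
    exact this
  set d : Fin (p + 1) → ℝ := fun i => w0' i / m - w0 i with hddef
  have hd : ∑ i, (b i : ℝ) * d i = 0 := by
    have e : ∀ i ∈ Finset.univ, (b i : ℝ) * d i = (b i : ℝ) * w0' i / m - (b i : ℝ) * w0 i :=
      fun i _ => by rw [hddef]; ring
    rw [Finset.sum_congr rfl e, Finset.sum_sub_distrib, ← Finset.sum_div, h2, h1]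
    field_simp
    norm_num
  -- explicit kernel vectors
  set u : Fin p → (Fin (p + 1) → ℤ) := fun l i =>
    (b l.succ : ℤ) * (if i = 0 then 1 else 0) - (b 0 : ℤ) * (if i = l.succ then 1 else 0)
    with hudef
  have hu : ∀ l, u l ∈ LinearMap.ker (sumCoeff12 p b) := by
    intro l
    rw [LinearMap.mem_ker, sumCoeff12_apply]
    simp only [hudef, mul_sub, mul_ite, mul_one, mul_zero, Finset.sum_sub_distrib,
      Finset.sum_ite_eq', Finset.mem_univ, if_true]
    ring
  have hu0 : ∀ l, u l 0 = (b l.succ : ℤ) := by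
    intro l
    simp [hudef, Ne.symm (Fin.succ_ne_zero l)]
  have husucc : ∀ l j, u l j.succ = if l = j then -(b 0 : ℤ) else 0 := by
    intro l j
    rcases eq_or_ne l j with h | h
    · subst h; simp [hudef, Fin.succ_ne_zero]
    · have : (j.succ : Fin (p + 1)) ≠ l.succ := fun hh => h (Fin.succ_inj.mp hh).symm
      simp [hudef, Fin.succ_ne_zero, this, h]
  set t0 : Fin p → ℝ := fun l : Fin p => -d l.succ / (b 0 : ℝ) with ht0def
  have hclaim1 : ∀ i, d i = ∑ l, t0 l * ((u l i : ℤ) : ℝ) := by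
    intro i
    induction i using Fin.cases with
    | zero =>
      have hS : (b 0 : ℝ) * d 0 + ∑ l : Fin p, (b l.succ : ℝ) * d l.succ = 0 := by
        rw [← Fin.sum_univ_succ (fun i => (b i : ℝ) * d i)]
        exact hd
      have e : ∀ l ∈ Finset.univ, t0 l * ((u l 0 : ℤ) : ℝ)
          = -((b l.succ : ℝ) * d l.succ) / b 0 := by
        intro l _
        rw [ht0def, hu0 l]
        push_cast
        ring
      have hS' : (∑ l : Fin p, (b l.succ : ℝ) * d l.succ) = -((b 0 : ℝ) * d 0) := by linarith
      rw [Finset.sum_congr rfl e, ← Finset.sum_div, Finset.sum_neg_distrib, hS', neg_neg,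
        mul_div_cancel_left₀ _ hb0]
    | succ j =>
      have e : ∀ l ∈ Finset.univ, t0 l * ((u l j.succ : ℤ) : ℝ)
          = if l = j then -d j.succ / b 0 * (-(b 0 : ℝ)) else 0 := by
        intro l _
        rw [husucc l j]
        split
        · next h => subst h; rw [ht0def]; push_cast; ring
        · simp
      rw [Finset.sum_congr rfl e]
      simp only [Finset.sum_ite_eq', Finset.mem_univ, if_true]
      rw [neg_div, neg_mul_neg, div_mul_cancel₀ _ hb0]
  -- representation of u l in the basis
  have hrep : ∀ l i, ((u l i : ℤ) : ℝ)
      = ∑ j, ((v.repr ⟨u l, hu l⟩ j : ℤ) : ℝ) * ((v j : Fin (p + 1) → ℤ) i : ℝ) := by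
    intro l i
    have hs := v.sum_repr ⟨u l, hu l⟩
    have h3 : (u l) i
        = ((∑ j, v.repr ⟨u l, hu l⟩ j • v j : LinearMap.ker (sumCoeff12 p b)) : Fin (p + 1) → ℤ) i := by
      rw [hs]
    rw [h3]
    simp only [AddSubmonoidClass.coe_finset_sum, Submodule.coe_smul, Finset.sum_apply,
      Pi.smul_apply, smul_eq_mul]
    push_cast
    rfl
  set t : Fin p → ℝ := fun jj => ∑ l, t0 l * ((v.repr ⟨u l, hu l⟩ jj : ℤ) : ℝ) with htdef
  have hspan : ∀ i, d i = ∑ jj, t jj * ((v jj : Fin (p + 1) → ℤ) i : ℝ) := by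
    intro i
    calc d i = ∑ l, t0 l * ((u l i : ℤ) : ℝ) := hclaim1 i
    _ = ∑ l, t0 l * (∑ jj, ((v.repr ⟨u l, hu l⟩ jj : ℤ) : ℝ) * ((v jj : Fin (p + 1) → ℤ) i : ℝ)) := by
        refine Finset.sum_congr rfl fun l _ => ?_
        rw [hrep l i]
    _ = ∑ l, ∑ jj, t0 l * (((v.repr ⟨u l, hu l⟩ jj : ℤ) : ℝ) * ((v jj : Fin (p + 1) → ℤ) i : ℝ)) := by
        refine Finset.sum_congr rfl fun l _ => ?_
        rw [Finset.mul_sum]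
    _ = ∑ jj, ∑ l, t0 l * (((v.repr ⟨u l, hu l⟩ jj : ℤ) : ℝ) * ((v jj : Fin (p + 1) → ℤ) i : ℝ)) :=
        Finset.sum_comm
    _ = ∑ jj, t jj * ((v jj : Fin (p + 1) → ℤ) i : ℝ) := by
        refine Finset.sum_congr rfl fun jj _ => ?_
        rw [htdef]
        simp only [Finset.sum_mul]
        exact Finset.sum_congr rfl fun l _ => by ring
  have hw0' : ∀ i, w0' i = m * (w0 i + ∑ jj, t jj * ((v jj : Fin (p + 1) → ℤ) i : ℝ)) := by
    intro i
    rw [← hspan i, hddef]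
    field_simp
    ring
  -- sum conditions are automatic
  have hsum : ∀ (w0'' : Fin (p + 1) → ℝ) (r : ℝ), (∑ i, (b i : ℝ) * w0'' i = r) →
      ∀ x : Fin p → ℝ, ∑ i, (b i : ℝ) * (w0'' i + ∑ j, x j * ((v j : Fin (p + 1) → ℤ) i : ℝ)) = r := by
    intro w0'' r hr x
    have e : ∀ i ∈ Finset.univ, (b i : ℝ) * (w0'' i + ∑ j, x j * ((v j : Fin (p + 1) → ℤ) i : ℝ))
        = (b i : ℝ) * w0'' i + ∑ j, x j * ((b i : ℝ) * ((v j : Fin (p + 1) → ℤ) i : ℝ)) := by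
      intro i _
      rw [mul_add, Finset.mul_sum]
      exact congrArg _ (Finset.sum_congr rfl fun j _ => by ring)
    rw [Finset.sum_congr rfl e, Finset.sum_add_distrib, hr, Finset.sum_comm]
    have : ∀ j ∈ Finset.univ, ∑ i, x j * ((b i : ℝ) * ((v j : Fin (p + 1) → ℤ) i : ℝ)) = 0 := by
      intro j _
      rw [← Finset.mul_sum, hker j, mul_zero]
    rw [Finset.sum_congr rfl this]
    simp
  -- set equality
  have key : ∀ (x : Fin p → ℝ) (i : Fin (p + 1)),
      w0' i + ∑ j, x j * ((v j : Fin (p + 1) → ℤ) i : ℝ)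
      = m * (w0 i + ∑ j, (t + (m : ℝ)⁻¹ • x) j * ((v j : Fin (p + 1) → ℤ) i : ℝ)) := by
    intro x i
    simp only [Pi.add_apply, Pi.smul_apply, smul_eq_mul]
    have e : ∀ j ∈ Finset.univ, (t j + (m : ℝ)⁻¹ * x j) * ((v j : Fin (p + 1) → ℤ) i : ℝ)
        = t j * ((v j : Fin (p + 1) → ℤ) i : ℝ)
          + (m : ℝ)⁻¹ * (x j * ((v j : Fin (p + 1) → ℤ) i : ℝ)) := fun j _ => by ring
    rw [Finset.sum_congr rfl e, Finset.sum_add_distrib, ← Finset.mul_sum, hw0' i]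
    field_simp
    ring
  have hset : ((fun x : Fin p → ℝ => fun i => w0' i + ∑ j, x j * ((v j : Fin (p + 1) → ℤ) i : ℝ))
          ⁻¹' {w : Fin (p + 1) → ℝ | (∀ i, 0 ≤ w i) ∧ ∑ i, (b i : ℝ) * w i = m})
      = (m : ℝ) • ((-t) +ᵥ ((fun x : Fin p → ℝ => fun i => w0 i + ∑ j, x j * ((v j : Fin (p + 1) → ℤ) i : ℝ))
          ⁻¹' {w : Fin (p + 1) → ℝ | (∀ i, 0 ≤ w i) ∧ ∑ i, (b i : ℝ) * w i = 1})) := by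
    ext x
    rw [Set.mem_smul_set_iff_inv_smul_mem₀ hmR.ne', Set.mem_vadd_set_iff_neg_vadd_mem]
    simp only [Set.mem_preimage, Set.mem_setOf_eq, neg_neg, vadd_eq_add]
    constructor
    · rintro ⟨hpos, -⟩
      refine ⟨fun i => ?_, hsum w0 1 h1 _⟩
      have hp := hpos i
      rw [key x i] at hp
      exact (mul_nonneg_iff_of_pos_left hmR).mp hp
    · rintro ⟨hpos, -⟩
      refine ⟨fun i => ?_, hsum w0' m h2 _⟩
      rw [key x i]
      exact mul_nonneg hmR.le (hpos i)
  rw [hset, Measure.addHaar_smul, measure_vadd]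
  congr 1
  rw [Module.finrank_fintype_fun_eq_card, Fintype.card_fin]
  rw [abs_of_nonneg (by positivity)]
  rw [ENNReal.ofReal_pow (by positivity), ENNReal.ofReal_natCast]

lemma part2_s12 (p m : ℕ) (hm : 0 < m) (b : Fin (p + 1) → ℕ) (hb : ∀ i, 0 < b i) :
    IsGreatest {k : ℕ | 0 < k ∧
        ∃ ξ ∈ (AddSubgroup.closure
            (Set.range fun i : Fin (p + 1) => (Pi.single i 1 : Fin (p + 1) → ℚ))
          ⊔ AddSubgroup.closure {fun i : Fin (p + 1) => (b i : ℚ) / m}),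
        ∃ c : ℤ, ∀ w : Fin (p + 1) → ℝ, (∀ i, 0 ≤ w i) → (∑ i, (b i : ℝ) * w i = m) →
          ∑ i, (ξ i : ℝ) * w i + (c : ℝ) = (k : ℝ)⁻¹}
      (Finset.univ.gcd b / Nat.gcd m (Finset.univ.gcd b)) := by
  set B := Finset.univ.gcd b with hBdef
  set g := Nat.gcd m B with hgdef
  set B₁ := B / g with hB₁def
  set m₁ := m / g with hm₁def
  have hB : 0 < B := Nat.pos_of_ne_zero fun h0 =>
    (hb 0).ne' (Finset.gcd_eq_zero_iff.mp h0 0 (Finset.mem_univ 0))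
  have hg : 0 < g := Nat.gcd_pos_of_pos_left _ hm
  have hgB : g ∣ B := Nat.gcd_dvd_right m B
  have hgm : g ∣ m := Nat.gcd_dvd_left m B
  have hB₁ : 0 < B₁ := Nat.div_pos (Nat.le_of_dvd hB hgB) hg
  have hm₁ : 0 < m₁ := Nat.div_pos (Nat.le_of_dvd hm hgm) hg
  have hmg : g * m₁ = m := Nat.mul_div_cancel' hgm
  have hBg : g * B₁ = B := Nat.mul_div_cancel' hgB
  have hcop : Nat.Coprime m₁ B₁ := Nat.coprime_div_gcd_div_gcd hg
  -- nonzero casts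
  have hbne : ∀ i, (b i : ℚ) ≠ 0 := fun i => Nat.cast_ne_zero.mpr (hb i).ne'
  have hmne : (m : ℚ) ≠ 0 := Nat.cast_ne_zero.mpr hm.ne'
  have hB₁ne : (B₁ : ℚ) ≠ 0 := Nat.cast_ne_zero.mpr hB₁.ne'
  have hgne : (g : ℚ) ≠ 0 := Nat.cast_ne_zero.mpr hg.ne'
  constructor
  · -- membership
    refine ⟨hB₁, ?_⟩
    -- Bezout
    have hcopZ : IsCoprime (m₁ : ℤ) (B₁ : ℤ) := by
      rw [Int.isCoprime_iff_gcd_eq_one, Int.gcd_natCast_natCast]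
      exact hcop
    obtain ⟨s, j, hsj⟩ := hcopZ
    refine ⟨fun i => (b i : ℚ) / (m * B₁), ?_, 0, ?_⟩
    · rw [AddSubgroup.mem_sup]
      refine ⟨fun i => ((b i / B : ℕ) : ℚ) * (s : ℚ), ?_,
        j • (fun i => (b i : ℚ) / m), ?_, ?_⟩
      · exact intvec_mem _ fun i => ⟨((b i / B : ℕ) : ℤ) * s, by rw [Int.cast_mul, Int.cast_natCast]⟩
      · exact AddSubgroup.zsmul_mem _ (AddSubgroup.subset_closure (Set.mem_singleton _)) _
      · funext i
        have hBb : B ∣ b i := Finset.gcd_dvd (Finset.mem_univ i)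
        have hcast : ((b i / B : ℕ) : ℚ) = (b i : ℚ) / B := by
          rw [Nat.cast_div hBb (Nat.cast_ne_zero.mpr hB.ne')]
        have hmq : (m : ℚ) = g * m₁ := by exact_mod_cast hmg.symm
        have hBq : (B : ℚ) = g * B₁ := by exact_mod_cast hBg.symm
        have hsjq : (s : ℚ) * m₁ + j * B₁ = 1 := by exact_mod_cast hsj
        simp only [Pi.add_apply, Pi.smul_apply, smul_eq_mul, hcast]
        rw [hmq, hBq]
        have hm₁ne : (m₁ : ℚ) ≠ 0 := Nat.cast_ne_zero.mpr hm₁.ne'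
        field_simp
        linear_combination (norm := skip) (b i : ℚ) * hsjq
        field_simp
        have e1 : (m₁ : ℚ) * (m₁ : ℚ)⁻¹ = 1 := mul_inv_cancel₀ hm₁ne
        have e2 : (g : ℚ) * (g : ℚ)⁻¹ = 1 := mul_inv_cancel₀ hgne
        linear_combination ((b i : ℚ) * B₁ * j * g * (g : ℚ)⁻¹) * e1 + ((b i : ℚ) * B₁ * j) * e2
    · intro w hw1 hw2
      have : ∀ i, ((((b i : ℚ) / (m * B₁)) : ℚ) : ℝ) * w i = ((b i : ℝ) * w i) / (m * B₁) := by
        intro i; push_cast; ring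
      rw [Finset.sum_congr rfl fun i _ => this i, ← Finset.sum_div, hw2]
      have hmR : (m : ℝ) ≠ 0 := Nat.cast_ne_zero.mpr hm.ne'
      have hB₁R : (B₁ : ℝ) ≠ 0 := Nat.cast_ne_zero.mpr hB₁.ne'
      push_cast
      field_simp
      simp
  · -- upper bound
    rintro k ⟨hk, ξ, hξmem, c, hfun⟩
    rw [AddSubgroup.mem_sup] at hξmem
    obtain ⟨x, hx, y, hy, hxy⟩ := hξmem
    obtain ⟨a, ha⟩ := AddSubgroup.mem_closure_singleton.mp hy
    choose n hn using coords_int x hx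
    have hkQ : (k : ℚ) ≠ 0 := Nat.cast_ne_zero.mpr hk.ne'
    -- evaluate at Pi.single-type points
    have key : ∀ i, (n i : ℤ) * (k * m) = (b i : ℤ) * (1 - (a + c) * k) := by
      intro i
      have hbR : (b i : ℝ) ≠ 0 := Nat.cast_ne_zero.mpr (hb i).ne'
      set w : Fin (p + 1) → ℝ := fun l => if l = i then (m : ℝ) / b i else 0 with hwdef
      have hw1 : ∀ l, 0 ≤ w l := by
        intro l; rw [hwdef]; dsimp only
        split
        · positivity
        · exact le_rfl
      have hw2 : ∑ l, (b l : ℝ) * w l = m := by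
        rw [hwdef]
        simp only [mul_ite, mul_zero, Finset.sum_ite_eq', Finset.mem_univ, if_true]
        field_simp
      have heq := hfun w hw1 hw2
      have hsum : ∑ l, (ξ l : ℝ) * w l = (ξ i : ℝ) * ((m : ℝ) / b i) := by
        rw [hwdef]
        simp [mul_ite, Finset.sum_ite_eq']
      rw [hsum] at heq
      -- to ℚ
      have hQ : (ξ i : ℚ) * ((m : ℚ) / b i) + (c : ℚ) = (k : ℚ)⁻¹ := by
        have : (((ξ i) * ((m : ℚ) / b i) + (c : ℚ) : ℚ) : ℝ) = (((k : ℚ)⁻¹ : ℚ) : ℝ) := by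
          push_cast
          convert heq using 2
        exact_mod_cast this
      have hξi : ξ i = (n i : ℚ) + a * ((b i : ℚ) / m) := by
        rw [← hxy]
        simp [Pi.add_apply, ← hn i, ← ha, Pi.smul_apply, smul_eq_mul]
      rw [hξi] at hQ
      have hbQ : (b i : ℚ) ≠ 0 := hbne i
      have : (n i : ℚ) * (k * m) = (b i : ℚ) * (1 - (a + c) * k) := by
        field_simp at hQ
        linear_combination hQ
      exact_mod_cast this
    set r : ℤ := 1 - (a + c) * k with hrdef
    have hdvd : ∀ i, (k * m) ∣ b i * r.natAbs := by
      intro i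
      have : ((k * m : ℕ) : ℤ) ∣ (b i : ℤ) * r := ⟨n i, by push_cast; linarith [key i]⟩
      have := Int.natAbs_dvd_natAbs.mpr this
      simpa [Int.natAbs_mul] using this
    have hdvdB : (k * m) ∣ B * r.natAbs := by
      have h1 : (k * m) ∣ Finset.univ.gcd (fun i => b i * r.natAbs) :=
        Finset.dvd_gcd fun i _ => hdvd i
      rwa [Finset.gcd_mul_right, normalize_eq] at h1
    have hdvd2 : k * m₁ ∣ B₁ * r.natAbs := by
      have : g * (k * m₁) ∣ g * (B₁ * r.natAbs) := by
        have e1 : g * (k * m₁) = k * m := by rw [← hmg]; ring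
        have e2 : g * (B₁ * r.natAbs) = B * r.natAbs := by rw [← hBg]; ring
        rw [e1, e2]; exact hdvdB
      exact (mul_dvd_mul_iff_left hg.ne').mp this
    have hkdvd : k ∣ B₁ * r.natAbs := dvd_trans (dvd_mul_right k m₁) hdvd2
    have hcopkr : Nat.Coprime k r.natAbs := by
      have : IsCoprime (k : ℤ) r := ⟨a + c, 1, by rw [hrdef]; ring⟩
      rw [Int.isCoprime_iff_gcd_eq_one] at this
      simpa [Int.gcd, Int.natAbs_natCast] using this
    exact Nat.le_of_dvd hB₁ (hcopkr.dvd_of_dvd_mul_right hkdvd)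

theorem stmt12 (p m : ℕ) (hm : 0 < m) (b : Fin (p + 1) → ℕ) (hb : ∀ i, 0 < b i) :
    -- (i) Vol(σ') = m^p · Vol(σ)
    (∀ (v : Module.Basis (Fin p) ℤ (LinearMap.ker (sumCoeff12 p b))) (w0 w0' : Fin (p + 1) → ℝ),
      (∑ i, (b i : ℝ) * w0 i = 1) → (∑ i, (b i : ℝ) * w0' i = m) →
      volume ((fun x : Fin p → ℝ => fun i => w0' i + ∑ j, x j * ((v j : Fin (p + 1) → ℤ) i : ℝ))
          ⁻¹' {w : Fin (p + 1) → ℝ | (∀ i, 0 ≤ w i) ∧ ∑ i, (b i : ℝ) * w i = m})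
        = (m : ENNReal) ^ p *
          volume ((fun x : Fin p → ℝ => fun i => w0 i + ∑ j, x j * ((v j : Fin (p + 1) → ℤ) i : ℝ))
            ⁻¹' {w : Fin (p + 1) → ℝ | (∀ i, 0 ≤ w i) ∧ ∑ i, (b i : ℝ) * w i = 1})) ∧
    -- (ii) b_{σ'} = b_σ / gcd(m, b_σ)
    IsGreatest {k : ℕ | 0 < k ∧
        ∃ ξ ∈ (AddSubgroup.closure
            (Set.range fun i : Fin (p + 1) => (Pi.single i 1 : Fin (p + 1) → ℚ))
          ⊔ AddSubgroup.closure {fun i : Fin (p + 1) => (b i : ℚ) / m}),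
        ∃ c : ℤ, ∀ w : Fin (p + 1) → ℝ, (∀ i, 0 ≤ w i) → (∑ i, (b i : ℝ) * w i = m) →
          ∑ i, (ξ i : ℝ) * w i + (c : ℝ) = (k : ℝ)⁻¹}
      (Finset.univ.gcd b / Nat.gcd m (Finset.univ.gcd b)) :=
  ⟨fun v w0 w0' h1 h2 => part1_s12 p m hm b hb v w0 w0' h1 h2, part2_s12 p m hm b hb⟩
end

section
/- Let ℂ_hyb denote ℂ equipped with the hybrid norm ‖z‖_hyb = max(|z|_0, |z|_∞), where |·|_0 is the trivial absolute value and |·|_∞ the usual one. Then every bounded multiplicative seminorm on ℂ_hyb is of the form |·|_∞^ρ for a unique ρ ∈ [0,1] (with ρ = 0 giving the trivial absolute value), and the resulting map ℳ(ℂ_hyb) → [0,1] is a homeomorphism for the topology of pointwise convergence. -/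
/- STATEMENT 14: The Berkovich spectrum of ℂ with the hybrid norm
‖z‖_hyb = max(|z|₀, |z|_∞) consists exactly of the seminorms |·|_∞^ρ, ρ ∈ [0,1]
(ρ = 0 giving the trivial absolute value), and the identification with [0,1]
is a homeomorphism for the topology of pointwise convergence. -/

/-- A bounded multiplicative seminorm on ℂ equipped with the hybrid norm
`‖z‖_hyb = max(|z|_∞, |z|₀)`, where `|·|₀` is the trivial absolute value. -/
def IsHybridSeminorm (N : ℂ → ℝ) : Prop :=
  (∀ z, 0 ≤ N z) ∧ N 0 = 0 ∧ N 1 = 1 ∧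
  (∀ z w, N (z * w) = N z * N w) ∧
  (∀ z w, N (z + w) ≤ N z + N w) ∧
  (∀ z, N z ≤ max ‖z‖ (if z = 0 then 0 else 1))

/-- The seminorm `|·|_∞^ρ`, interpreted as the trivial absolute value for ρ = 0. -/
noncomputable def hybPow (ρ : ℝ) (z : ℂ) : ℝ :=
  if z = 0 then 0 else ‖z‖ ^ ρ



-- Cauchy functional equation with squeeze
lemma additive_linear (h : ℝ → ℝ) (hadd : ∀ s t, h (s + t) = h s + h t)
    (hb : ∀ t : ℝ, 0 ≤ t → 0 ≤ h t ∧ h t ≤ t) : ∀ t, h t = h 1 * t := by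
  have hrat : ∀ (q : ℚ) (t : ℝ), h ((q : ℝ) * t) = (q : ℝ) * h t := by
    intro q t
    have := map_ratCast_smul (AddMonoidHom.mk' h hadd) ℝ ℝ q t
    simpa [smul_eq_mul] using this
  have hq : ∀ q : ℚ, h (q : ℝ) = (q : ℝ) * h 1 := by
    intro q; simpa using hrat q 1
  have hmono : ∀ s t : ℝ, s ≤ t → h s ≤ h t := by
    intro s t hst
    have : h t = h s + h (t - s) := by rw [← hadd]; ring_nf
    have h2 := (hb (t - s) (by linarith)).1
    linarith
  have h1nn : 0 ≤ h 1 := (hb 1 zero_le_one).1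
  intro t
  rcases eq_or_lt_of_le h1nn with h10 | h1pos
  · -- h 1 = 0 : show h t = 0
    obtain ⟨q, hq1⟩ := exists_rat_gt t
    obtain ⟨p, hp1⟩ := exists_rat_lt t
    have hup : h t ≤ 0 := by
      have := hmono t q hq1.le; rw [hq q, ← h10] at this; linarith
    have hdn : 0 ≤ h t := by
      have := hmono p t hp1.le; rw [hq p, ← h10] at this; linarith
    rw [← h10]; linarith
  · by_contra hne
    rcases lt_or_gt_of_ne hne with hlt | hgt
    · -- h t < h 1 * t: pick rational q ∈ (h t / h 1, t)
      have hlt' : h t / h 1 < t := (div_lt_iff₀ h1pos).2 (by linarith [hlt])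
      obtain ⟨q, hq1, hq2⟩ := exists_rat_btwn hlt'
      have h3 : h q ≤ h t := hmono q t hq2.le
      rw [hq q] at h3
      have h4 : h t < q * h 1 := by
        have := (div_lt_iff₀ h1pos).1 hq1; linarith
      linarith
    · have hlt' : t < h t / h 1 := (lt_div_iff₀ h1pos).2 (by linarith [hgt])
      obtain ⟨q, hq1, hq2⟩ := exists_rat_btwn hlt'
      have hle : h t ≤ h q := hmono t q hq1.le
      rw [hq q] at hle
      have h4 : q * h 1 < h t := by
        have := (lt_div_iff₀ h1pos).1 hq2; linarith
      linarith

lemma real_rpow_add_le {a b p : ℝ} (ha : 0 ≤ a) (hb : 0 ≤ b) (hp : 0 ≤ p) (hp1 : p ≤ 1) :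
    (a + b) ^ p ≤ a ^ p + b ^ p := by
  lift a to NNReal using ha
  lift b to NNReal using hb
  have := NNReal.rpow_add_le_add_rpow a b hp hp1
  exact_mod_cast this

lemma hybPow_isHybrid {ρ : ℝ} (h0 : 0 ≤ ρ) (h1 : ρ ≤ 1) : IsHybridSeminorm (hybPow ρ) := by
  have habs : ∀ z : ℂ, (0:ℝ) ≤ ‖z‖ := fun z => norm_nonneg z
  refine ⟨?_, ?_, ?_, ?_, ?_, ?_⟩
  · intro z; unfold hybPow; split
    · exact le_refl 0
    · exact Real.rpow_nonneg (habs z) ρ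
  · simp [hybPow]
  · simp [hybPow]
  · intro z w
    unfold hybPow
    by_cases hz : z = 0
    · simp [hz]
    by_cases hw : w = 0
    · simp [hw]
    have hzw : z * w ≠ 0 := mul_ne_zero hz hw
    rw [if_neg hzw, if_neg hz, if_neg hw, norm_mul,
      Real.mul_rpow (habs z) (habs w)]
  · intro z w
    by_cases hz : z = 0
    · simp [hz, hybPow]
    by_cases hw : w = 0
    · simp [hw, hybPow]
    by_cases hzw : z + w = 0
    · unfold hybPow
      rw [if_neg hz, if_neg hw, if_pos hzw]
      positivity
    · unfold hybPow
      rw [if_neg hz, if_neg hw, if_neg hzw]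
      calc ‖z + w‖ ^ ρ ≤ (‖z‖ + ‖w‖) ^ ρ := by
            apply Real.rpow_le_rpow (habs _) (norm_add_le z w) h0
        _ ≤ ‖z‖ ^ ρ + ‖w‖ ^ ρ :=
            real_rpow_add_le (habs z) (habs w) h0 h1
  · intro z
    by_cases hz : z = 0
    · simp [hz, hybPow]
    unfold hybPow
    rw [if_neg hz]
    rcases le_total (‖z‖) 1 with hle | hge
    · exact le_max_of_le_right (by rw [if_neg hz]; exact Real.rpow_le_one (habs z) hle h0)
    · refine le_max_of_le_left ?_
      calc ‖z‖ ^ ρ ≤ ‖z‖ ^ (1:ℝ) :=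
            Real.rpow_le_rpow_of_exponent_le hge h1
        _ = ‖z‖ := Real.rpow_one _

lemma classify {N : ℂ → ℝ} (hN : IsHybridSeminorm N) :
    ∃ ρ : ℝ, ρ ∈ Set.Icc (0:ℝ) 1 ∧ N = hybPow ρ := by
  obtain ⟨hpos, hz0, hone, hmul, hadd, hbd⟩ := hN
  have hne : ∀ z : ℂ, z ≠ 0 → 0 < N z := by
    intro z hz
    rcases (hpos z).lt_or_eq with h | h
    · exact h
    · exfalso
      have : N (z * z⁻¹) = N z * N z⁻¹ := hmul z z⁻¹
      rw [mul_inv_cancel₀ hz, hone, ← h] at this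
      simp at this
  have hcirc : ∀ z : ℂ, ‖z‖ = 1 → N z = 1 := by
    intro z hz
    have hz0' : z ≠ 0 := by
      intro h; rw [h] at hz; simp at hz
    have h1 : N z ≤ 1 := by
      have := hbd z; rw [hz, if_neg hz0'] at this; simpa using this
    have hz2 : ‖z⁻¹‖ = 1 := by rw [norm_inv, hz]; norm_num
    have h2 : N z⁻¹ ≤ 1 := by
      have := hbd z⁻¹
      rw [hz2, if_neg (inv_ne_zero hz0')] at this; simpa using this
    have h3 : N z * N z⁻¹ = 1 := by
      rw [← hmul, mul_inv_cancel₀ hz0', hone]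
    nlinarith [hne z hz0', hne z⁻¹ (inv_ne_zero hz0')]
  have habsval : ∀ z : ℂ, z ≠ 0 → N z = N ((‖z‖ : ℝ) : ℂ) := by
    intro z hz
    have hzpos : (0:ℝ) < ‖z‖ := norm_pos_iff.mpr hz
    have hcne : ((‖z‖ : ℝ) : ℂ) ≠ 0 := by
      simpa [Complex.ofReal_ne_zero] using hzpos.ne'
    have hdecomp : z = ((‖z‖ : ℝ) : ℂ) * (z / ((‖z‖ : ℝ) : ℂ)) := by
      rw [mul_div_cancel₀ _ hcne]
    have hquot : ‖z / ((‖z‖ : ℝ) : ℂ)‖ = 1 := by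
      rw [norm_div, Complex.norm_real, Real.norm_eq_abs, abs_of_pos hzpos, div_self hzpos.ne']
    calc N z = N (((‖z‖ : ℝ) : ℂ) * (z / ((‖z‖ : ℝ) : ℂ))) := by
          rw [← hdecomp]
      _ = N ((‖z‖ : ℝ) : ℂ) * N (z / ((‖z‖ : ℝ) : ℂ)) := hmul _ _
      _ = N ((‖z‖ : ℝ) : ℂ) := by rw [hcirc _ hquot, mul_one]
  -- define h
  set h : ℝ → ℝ := fun t => Real.log (N ((Real.exp t : ℝ) : ℂ)) with hh
  have hexpne : ∀ t : ℝ, ((Real.exp t : ℝ) : ℂ) ≠ 0 := by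
    intro t
    simp [Complex.ofReal_ne_zero, (Real.exp_pos t).ne']
  have haddh : ∀ s t, h (s + t) = h s + h t := by
    intro s t
    have : ((Real.exp (s + t) : ℝ) : ℂ) = ((Real.exp s : ℝ) : ℂ) * ((Real.exp t : ℝ) : ℂ) := by
      rw [Real.exp_add]; push_cast; ring
    rw [hh]
    simp only
    rw [this, hmul, Real.log_mul (hne _ (hexpne s)).ne' (hne _ (hexpne t)).ne']
  have hbh : ∀ t : ℝ, 0 ≤ t → 0 ≤ h t ∧ h t ≤ t := by
    intro t ht
    have hb1 : N ((Real.exp t : ℝ) : ℂ) ≤ Real.exp t := by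
      have := hbd ((Real.exp t : ℝ) : ℂ)
      rw [if_neg (hexpne t), Complex.norm_real, Real.norm_eq_abs, abs_of_pos (Real.exp_pos t)] at this
      have h1le : (1:ℝ) ≤ Real.exp t := Real.one_le_exp ht
      rwa [max_eq_left h1le] at this
    have hb2 : 1 ≤ N ((Real.exp t : ℝ) : ℂ) := by
      have hprod : N ((Real.exp t : ℝ) : ℂ) * N ((Real.exp (-t) : ℝ) : ℂ) = 1 := by
        rw [← hmul]
        have : ((Real.exp t : ℝ) : ℂ) * ((Real.exp (-t) : ℝ) : ℂ) = 1 := by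
          rw [← Complex.ofReal_mul, ← Real.exp_add]; simp
        rw [this, hone]
      have hble : N ((Real.exp (-t) : ℝ) : ℂ) ≤ 1 := by
        have := hbd ((Real.exp (-t) : ℝ) : ℂ)
        rw [if_neg (hexpne (-t)), Complex.norm_real, Real.norm_eq_abs, abs_of_pos (Real.exp_pos (-t))] at this
        have : N ((Real.exp (-t) : ℝ) : ℂ) ≤ max (Real.exp (-t)) 1 := this
        have hle1 : Real.exp (-t) ≤ 1 := Real.exp_le_one_iff.mpr (by linarith)
        rwa [max_eq_right hle1] at this
      nlinarith [hne _ (hexpne t), hne _ (hexpne (-t))]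
    constructor
    · exact Real.log_nonneg hb2
    · calc h t ≤ Real.log (Real.exp t) := Real.log_le_log (hne _ (hexpne t)) hb1
        _ = t := Real.log_exp t
  have hlin := additive_linear h haddh hbh
  refine ⟨h 1, ⟨(hbh 1 zero_le_one).1, (hbh 1 zero_le_one).2⟩, ?_⟩
  funext z
  by_cases hz : z = 0
  · simp [hz, hz0, hybPow]
  · have hzpos : (0:ℝ) < ‖z‖ := norm_pos_iff.mpr hz
    have key : N z = ‖z‖ ^ (h 1) := by
      have e1 : N z = N ((Real.exp (Real.log (‖z‖)) : ℝ) : ℂ) := by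
        rw [Real.exp_log hzpos]; exact habsval z hz
      have e2 : Real.log (N z) = h (Real.log (‖z‖)) := by
        rw [hh]; simp only; rw [← e1]
      have e3 : Real.log (N z) = h 1 * Real.log (‖z‖) := by
        rw [e2, hlin]
      have := Real.exp_log (hne z hz)
      rw [← this, e3, Real.rpow_def_of_pos hzpos, mul_comm]
    rw [key]; unfold hybPow; rw [if_neg hz]

theorem stmt14 :
    (∀ N : ℂ → ℝ, IsHybridSeminorm N →
      ∃! ρ : ℝ, ρ ∈ Set.Icc (0 : ℝ) 1 ∧ N = hybPow ρ) ∧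
    ∃ h : (Set.Icc (0 : ℝ) 1) ≃ₜ {N : ℂ → ℝ // IsHybridSeminorm N},
      ∀ ρ : Set.Icc (0 : ℝ) 1, ((h ρ : ℂ → ℝ)) = hybPow ρ := by
  have uniq : ∀ ρ ρ' : ℝ, ρ ∈ Set.Icc (0:ℝ) 1 → ρ' ∈ Set.Icc (0:ℝ) 1 →
      hybPow ρ = hybPow ρ' → ρ = ρ' := by
    intro ρ ρ' _ _ hEq
    have h2 := congrFun hEq (2 : ℂ)
    unfold hybPow at h2
    rw [if_neg (two_ne_zero), if_neg (two_ne_zero), Complex.norm_two] at h2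
    have ha := (Real.rpow_le_rpow_left_iff one_lt_two).1 h2.le
    have hb := (Real.rpow_le_rpow_left_iff one_lt_two).1 h2.ge
    linarith
  constructor
  · intro N hN
    obtain ⟨ρ, hρ, hEq⟩ := classify hN
    exact ⟨ρ, ⟨hρ, hEq⟩, fun ρ' ⟨hρ', hEq'⟩ => uniq ρ' ρ hρ' hρ (hEq'.symm.trans hEq)⟩
  · set φ : Set.Icc (0:ℝ) 1 → {N : ℂ → ℝ // IsHybridSeminorm N} :=
      fun ρ => ⟨hybPow ρ, hybPow_isHybrid ρ.2.1 ρ.2.2⟩ with hφ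
    have hbij : Function.Bijective φ := by
      constructor
      · intro ρ ρ' hEq
        apply Subtype.ext
        exact uniq ρ ρ' ρ.2 ρ'.2 (congrArg Subtype.val hEq)
      · rintro ⟨N, hN⟩
        obtain ⟨ρ, hρ, hEq⟩ := classify hN
        exact ⟨⟨ρ, hρ⟩, Subtype.ext hEq.symm⟩
    have hcont : Continuous φ := by
      apply Continuous.subtype_mk
      apply continuous_pi
      intro z
      by_cases hz : z = 0
      · simpa [hybPow, hz] using continuous_const
      · have heq : (fun ρ : Set.Icc (0:ℝ) 1 => hybPow ρ z) =
            fun ρ : Set.Icc (0:ℝ) 1 => Real.exp (Real.log (‖z‖) * ρ) := by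
          funext ρ
          rw [hybPow, if_neg hz, Real.rpow_def_of_pos (norm_pos_iff.mpr hz)]
        rw [heq]
        exact Real.continuous_exp.comp (continuous_const.mul continuous_subtype_val)
    haveI : CompactSpace (Set.Icc (0:ℝ) 1) := isCompact_iff_compactSpace.mp isCompact_Icc
    let e : Set.Icc (0:ℝ) 1 ≃ {N : ℂ → ℝ // IsHybridSeminorm N} := Equiv.ofBijective φ hbij
    exact ⟨Continuous.homeoOfEquivCompactToT2 (f := e) hcont, fun ρ => rfl⟩
end

section
/- Consider the map Log: (𝔻*)² → [0,1], Log(z_0,z_1) = log|z_1| / log|z_0 z_1|. If (U', z') is another adapted coordinate chart with z'_i = u_i z_i for nonvanishing holomorphic units u_0, u_1, then Log' − Log = O(1/log|z_0 z_1|^{-1}) locally uniformly; in particular, along any sequence (z_0^{(k)}, z_1^{(k)}) with z_0^{(k)} z_1^{(k)} → 0, the difference Log'(z^{(k)}) − Log(z^{(k)}) tends to 0. -/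
open Filter Topology

lemma key_est (a b c0 c1 M : ℝ) (hM : 0 < M) (hc0 : |c0| ≤ M) (hc1 : |c1| ≤ M)
    (hab : b ≤ a) (ha : a ≤ 0) (hb : b < -(4*M)) :
    |(c1 + a)/(b + (c0 + c1)) - a/b| ≤ 6*M / (-b) := by
  have hbneg : b < 0 := by nlinarith
  have hb0 : b ≠ 0 := ne_of_lt hbneg
  obtain ⟨hc0l, hc0r⟩ := abs_le.mp hc0
  obtain ⟨hc1l, hc1r⟩ := abs_le.mp hc1
  have hb' : b + (c0 + c1) ≤ b/2 := by nlinarith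
  have hb'neg : b + (c0 + c1) < 0 := lt_of_le_of_lt hb' (by linarith)
  have hb'0 : b + (c0 + c1) ≠ 0 := ne_of_lt hb'neg
  have heq : (c1 + a)/(b + (c0 + c1)) - a/b
      = (c1*b - a*(c0+c1)) / ((b + (c0+c1))*b) := by
    field_simp; ring
  rw [heq, abs_div]
  have habs : |a| ≤ -b := by rw [abs_of_nonpos ha]; linarith
  have hnum : |c1*b - a*(c0+c1)| ≤ 3*M*(-b) := by
    have h1 : |c1*b| ≤ M * (-b) := by
      rw [abs_mul, abs_of_neg hbneg]
      exact mul_le_mul_of_nonneg_right hc1 (by linarith)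
    have h2 : |a*(c0+c1)| ≤ (-b) * (2*M) := by
      rw [abs_mul]
      apply mul_le_mul habs _ (abs_nonneg _) (by linarith)
      calc |c0 + c1| ≤ |c0| + |c1| := abs_add_le _ _
        _ ≤ 2*M := by linarith
    calc |c1*b - a*(c0+c1)| ≤ |c1*b| + |a*(c0+c1)| := abs_sub _ _
      _ ≤ M*(-b) + (-b)*(2*M) := add_le_add h1 h2
      _ = 3*M*(-b) := by ring
  have hdenpos : 0 < (b + (c0+c1))*b := mul_pos_of_neg_of_neg hb'neg hbneg
  rw [abs_of_pos hdenpos, div_le_div_iff₀ hdenpos (by linarith : (0:ℝ) < -b)]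
  nlinarith [abs_nonneg (c1*b - a*(c0+c1))]

theorem stmt19 (U : Set (ℂ × ℂ)) (hU : IsOpen U)
    (hU1 : ∀ z ∈ U, ‖z.1‖ < 1 ∧ ‖z.2‖ < 1)
    (u₀ u₁ : ℂ × ℂ → ℂ)
    (hu₀ : DifferentiableOn ℂ u₀ U) (hu₁ : DifferentiableOn ℂ u₁ U)
    (hne₀ : ∀ z ∈ U, u₀ z ≠ 0) (hne₁ : ∀ z ∈ U, u₁ z ≠ 0) :
    (∀ K : Set (ℂ × ℂ), K ⊆ U → IsCompact K →
      ∃ C > (0 : ℝ), ∃ δ ∈ Set.Ioo (0 : ℝ) 1, ∀ z ∈ K, z.1 * z.2 ≠ 0 →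
        ‖(z.1 * z.2)‖ < δ →
        |Real.log (‖(u₁ z * z.2)‖) /
            Real.log (‖((u₀ z * z.1) * (u₁ z * z.2))‖)
          - Real.log (‖z.2‖) / Real.log (‖(z.1 * z.2)‖)|
          ≤ C / Real.log ((‖(z.1 * z.2)‖)⁻¹)) ∧
    (∀ K : Set (ℂ × ℂ), K ⊆ U → IsCompact K → ∀ zk : ℕ → ℂ × ℂ,
      (∀ k, zk k ∈ K ∧ (zk k).1 * (zk k).2 ≠ 0) →
      Tendsto (fun k => (zk k).1 * (zk k).2) atTop (𝓝 0) →
      Tendsto (fun k =>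
          Real.log (‖(u₁ (zk k) * (zk k).2)‖) /
              Real.log (‖((u₀ (zk k) * (zk k).1) * (u₁ (zk k) * (zk k).2))‖)
            - Real.log (‖((zk k).2)‖) /
              Real.log (‖((zk k).1 * (zk k).2)‖))
        atTop (𝓝 0)) := by
  have main : ∀ K : Set (ℂ × ℂ), K ⊆ U → IsCompact K →
      ∃ C > (0 : ℝ), ∃ δ ∈ Set.Ioo (0 : ℝ) 1, ∀ z ∈ K, z.1 * z.2 ≠ 0 →
        ‖(z.1 * z.2)‖ < δ →
        |Real.log (‖(u₁ z * z.2)‖) /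
            Real.log (‖((u₀ z * z.1) * (u₁ z * z.2))‖)
          - Real.log (‖z.2‖) / Real.log (‖(z.1 * z.2)‖)|
          ≤ C / Real.log ((‖(z.1 * z.2)‖)⁻¹) := by
    intro K hKU hK
    -- bound on log |u_i| over K
    have hcont : ContinuousOn
        (fun z => |Real.log (‖(u₀ z)‖)| + |Real.log (‖(u₁ z)‖)|) K := by
      have h0 : ContinuousOn (fun z => Real.log (‖(u₀ z)‖)) K := by
        intro z hz
        exact ((Real.continuousAt_log (by
            simpa using hne₀ z (hKU hz))).comp
          (continuous_norm.continuousAt)).comp_continuousWithinAt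
          (((hu₀.continuousOn).mono hKU) z hz)
      have h1 : ContinuousOn (fun z => Real.log (‖(u₁ z)‖)) K := by
        intro z hz
        exact ((Real.continuousAt_log (by
            simpa using hne₁ z (hKU hz))).comp
          (continuous_norm.continuousAt)).comp_continuousWithinAt
          (((hu₁.continuousOn).mono hKU) z hz)
      exact h0.abs.add h1.abs
    obtain ⟨C0, hC0⟩ := hK.exists_bound_of_continuousOn hcont
    set M : ℝ := max C0 1 with hMdef
    have hM : 0 < M := lt_of_lt_of_le one_pos (le_max_right _ _)
    have hbound : ∀ z ∈ K, |Real.log (‖(u₀ z)‖)| ≤ M ∧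
        |Real.log (‖(u₁ z)‖)| ≤ M := by
      intro z hz
      have := hC0 z hz
      rw [Real.norm_eq_abs, abs_of_nonneg (by positivity)] at this
      constructor
      · calc |Real.log (‖(u₀ z)‖)| ≤ _ := by
              nlinarith [abs_nonneg (Real.log (‖(u₁ z)‖))]
          _ ≤ M := le_trans this (le_max_left _ _)
      · calc |Real.log (‖(u₁ z)‖)| ≤ _ := by
              nlinarith [abs_nonneg (Real.log (‖(u₀ z)‖))]
          _ ≤ M := le_trans this (le_max_left _ _)
    refine ⟨6*M, by linarith, Real.exp (-(4*M)), ⟨Real.exp_pos _, ?_⟩, ?_⟩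
    · rw [Real.exp_lt_one_iff]; linarith
    intro z hzK hz0 hzδ
    have hz1 : z.1 ≠ 0 := fun h => hz0 (by simp [h])
    have hz2 : z.2 ≠ 0 := fun h => hz0 (by simp [h])
    have hzU := hKU hzK
    have hu0 := hne₀ z hzU
    have hu1 := hne₁ z hzU
    have ha1 : ‖z.1‖ ≠ 0 := by simpa using hz1
    have ha2 : ‖z.2‖ ≠ 0 := by simpa using hz2
    have hau0 : ‖(u₀ z)‖ ≠ 0 := by simpa using hu0
    have hau1 : ‖(u₁ z)‖ ≠ 0 := by simpa using hu1
    set a := Real.log (‖z.2‖)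
    set l1 := Real.log (‖z.1‖)
    set c0 := Real.log (‖(u₀ z)‖)
    set c1 := Real.log (‖(u₁ z)‖)
    have hrw1 : Real.log (‖(u₁ z * z.2)‖) = c1 + a := by
      rw [norm_mul, Real.log_mul hau1 ha2]
    have hrwb : Real.log (‖(z.1 * z.2)‖) = l1 + a := by
      rw [norm_mul, Real.log_mul ha1 ha2]
    have hrw2 : Real.log (‖((u₀ z * z.1) * (u₁ z * z.2))‖)
        = (l1 + a) + (c0 + c1) := by
      rw [norm_mul, norm_mul, norm_mul,
        Real.log_mul (mul_ne_zero hau0 ha1) (mul_ne_zero hau1 ha2),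
        Real.log_mul hau0 ha1, Real.log_mul hau1 ha2]
      ring
    have hc0M : |c0| ≤ M := (hbound z hzK).1
    have hc1M : |c1| ≤ M := (hbound z hzK).2
    have ha0 : a ≤ 0 := Real.log_nonpos (by positivity) (le_of_lt (hU1 z hzU).2)
    have hl10 : l1 ≤ 0 := Real.log_nonpos (by positivity) (le_of_lt (hU1 z hzU).1)
    have hblt : l1 + a < -(4*M) := by
      have := Real.log_lt_log (norm_pos_iff.mpr hz0) hzδ
      rwa [hrwb, Real.log_exp] at this
    rw [hrw1, hrw2, hrwb, Real.log_inv, hrwb]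
    have := key_est a (l1 + a) c0 c1 M hM hc0M hc1M (by linarith) ha0 hblt
    simpa using this
  refine ⟨main, ?_⟩
  intro K hKU hK zk hzk htend
  obtain ⟨C, hC, δ, hδ, hmain⟩ := main K hKU hK
  have habs : Tendsto (fun k => ‖((zk k).1 * (zk k).2)‖) atTop (𝓝 0) := by
    simpa using htend.norm
  have hpos : ∀ k, 0 < ‖((zk k).1 * (zk k).2)‖ := fun k => by
    exact norm_pos_iff.mpr (hzk k).2
  have hlog : Tendsto (fun k => Real.log (‖((zk k).1 * (zk k).2)‖)) atTop atBot := by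
    apply Real.tendsto_log_nhdsGT_zero.comp
    exact tendsto_nhdsWithin_of_tendsto_nhds_of_eventually_within _ habs
      (Eventually.of_forall fun k => hpos k)
  have hg : Tendsto (fun k => C / Real.log ((‖((zk k).1 * (zk k).2)‖)⁻¹))
      atTop (𝓝 0) := by
    simp only [Real.log_inv]
    exact tendsto_const_nhds.div_atTop (tendsto_neg_atBot_atTop.comp hlog)
  apply squeeze_zero_norm' _ hg
  have hev : ∀ᶠ k in atTop, ‖((zk k).1 * (zk k).2)‖ < δ :=
    habs.eventually (gt_mem_nhds hδ.1)
  filter_upwards [hev] with k hk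
  rw [Real.norm_eq_abs]
  exact hmain (zk k) (hzk k).1 (hzk k).2 hk
end
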